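/- arXiv:1204.3212 — 8 statements merged into one kernel-verified Lean document; each statement's English description precedes it below -/
import Mathlib

section
/- The set of global minimizers of L_{y,λ} is nonempty and compact if and only if Ker Φ ∩ Ker D* = {0}. -/
open Matrix MeasureTheory ProbabilityTheory

/-- The analysis lasso objective `L_{y,λ}(x) = (1/2)‖y − Φx‖₂² + λ‖D*x‖₁`. -/
noncomputable def lassoObj {N Q P : ℕ} (Φ : Matrix (Fin Q) (Fin N) ℝ)
    (D : Matrix (Fin N) (Fin P) ℝ) (y : Fin Q → ℝ) (lam : ℝ) (x : Fin N → ℝ) : ℝ :=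
  (1 / 2) * ∑ i, (y i - Φ.mulVec x i) ^ 2 + lam * ∑ j, |Dᵀ.mulVec x j|

/-- `x` is a solution of `(P_λ(y))`, i.e. a global minimizer of the lasso objective. -/
def IsLassoSol {N Q P : ℕ} (Φ : Matrix (Fin Q) (Fin N) ℝ)
    (D : Matrix (Fin N) (Fin P) ℝ) (y : Fin Q → ℝ) (lam : ℝ) (x : Fin N → ℝ) : Prop :=
  ∀ x' : Fin N → ℝ, lassoObj Φ D y lam x ≤ lassoObj Φ D y lam x'

section Aux

variable {N Q P : ℕ} (Φ : Matrix (Fin Q) (Fin N) ℝ) (D : Matrix (Fin N) (Fin P) ℝ)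

lemma continuous_mulVec' {m n : ℕ} (A : Matrix (Fin m) (Fin n) ℝ) :
    Continuous fun x : Fin n → ℝ => A.mulVec x := by
  have h := LinearMap.continuous_on_pi (A.mulVecLin)
  exact h

lemma continuous_lassoObj (y : Fin Q → ℝ) (lam : ℝ) :
    Continuous (lassoObj Φ D y lam) := by
  unfold lassoObj
  apply Continuous.add
  · exact continuous_const.mul (continuous_finset_sum _ fun i _ =>
      (continuous_const.sub ((continuous_apply i).comp (continuous_mulVec' Φ))).pow 2)
  · exact continuous_const.mul (continuous_finset_sum _ fun j _ =>
      continuous_abs.comp ((continuous_apply j).comp (continuous_mulVec' Dᵀ)))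

/-- The homogeneous lower-bound function. -/
noncomputable def lassoG (lam : ℝ) (x : Fin N → ℝ) : ℝ :=
  (1 / 4) * ∑ i, (Φ.mulVec x i) ^ 2 + lam * ∑ j, |Dᵀ.mulVec x j|

lemma continuous_lassoG (lam : ℝ) : Continuous (lassoG Φ D lam) := by
  unfold lassoG
  apply Continuous.add
  · exact continuous_const.mul (continuous_finset_sum _ fun i _ =>
      ((continuous_apply i).comp (continuous_mulVec' Φ)).pow 2)
  · exact continuous_const.mul (continuous_finset_sum _ fun j _ =>
      continuous_abs.comp ((continuous_apply j).comp (continuous_mulVec' Dᵀ)))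

lemma lassoG_nonneg {lam : ℝ} (hlam : 0 < lam) (x : Fin N → ℝ) :
    0 ≤ lassoG Φ D lam x := by
  unfold lassoG
  have h1 : (0:ℝ) ≤ ∑ i, (Φ.mulVec x i) ^ 2 :=
    Finset.sum_nonneg fun i _ => sq_nonneg _
  have h2 : (0:ℝ) ≤ ∑ j, |Dᵀ.mulVec x j| :=
    Finset.sum_nonneg fun j _ => abs_nonneg _
  positivity

lemma lassoObj_ge (y : Fin Q → ℝ) (lam : ℝ) (x : Fin N → ℝ) :
    lassoG Φ D lam x - (1 / 2) * ∑ i, (y i) ^ 2 ≤ lassoObj Φ D y lam x := by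
  unfold lassoObj lassoG
  have h : ∀ i ∈ Finset.univ, (Φ.mulVec x i) ^ 2 / 2 - (y i) ^ 2 ≤ (y i - Φ.mulVec x i) ^ 2 :=
    fun i _ => by nlinarith [sq_nonneg (Φ.mulVec x i - 2 * y i)]
  have hsum := Finset.sum_le_sum h
  rw [Finset.sum_sub_distrib] at hsum
  rw [← Finset.sum_div] at hsum
  linarith

end Aux

/-- The set of global minimizers of `L_{y,λ}` is nonempty and compact if and only if
`Ker Φ ∩ Ker D* = {0}`. -/
theorem lasso_minimizers_nonempty_compact_iff
    {N Q P : ℕ} (hN : 0 < N) (hQ : 0 < Q) (hP : 0 < P)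
    (Φ : Matrix (Fin Q) (Fin N) ℝ) (D : Matrix (Fin N) (Fin P) ℝ)
    (y : Fin Q → ℝ) (lam : ℝ) (hlam : 0 < lam) :
    ({x : Fin N → ℝ | IsLassoSol Φ D y lam x}.Nonempty ∧
        IsCompact {x : Fin N → ℝ | IsLassoSol Φ D y lam x}) ↔
      (∀ x : Fin N → ℝ, Φ.mulVec x = 0 → Dᵀ.mulVec x = 0 → x = 0) := by
  set f := lassoObj Φ D y lam with hf_def
  have hf : Continuous f := continuous_lassoObj Φ D y lam
  constructor
  · rintro ⟨⟨x₀, hx₀⟩, hcomp⟩ x hΦx hDx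
    by_contra hx
    -- the whole line x₀ + t • x consists of minimizers
    have hline : ∀ t : ℝ, IsLassoSol Φ D y lam (x₀ + t • x) := by
      intro t
      have hΦ : Φ.mulVec (x₀ + t • x) = Φ.mulVec x₀ := by
        rw [Matrix.mulVec_add, Matrix.mulVec_smul, hΦx]
        simp
      have hD : Dᵀ.mulVec (x₀ + t • x) = Dᵀ.mulVec x₀ := by
        rw [Matrix.mulVec_add, Matrix.mulVec_smul, hDx]
        simp
      have heq : lassoObj Φ D y lam (x₀ + t • x) = lassoObj Φ D y lam x₀ := by
        unfold lassoObj
        rw [hΦ, hD]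
      intro x'
      rw [heq]
      exact hx₀ x'
    obtain ⟨R, hR⟩ := hcomp.isBounded.subset_closedBall 0
    have hxn : (0:ℝ) < ‖x‖ := norm_pos_iff.mpr hx
    set t := (R + ‖x₀‖ + 1) / ‖x‖ with ht_def
    have hz := hR (hline t)
    rw [Metric.mem_closedBall, dist_zero_right] at hz
    have htx : ‖t • x‖ = |t| * ‖x‖ := by rw [norm_smul]; rfl
    have htpos : t * ‖x‖ = R + ‖x₀‖ + 1 := div_mul_cancel₀ _ (ne_of_gt hxn)
    have hbound : ‖t • x‖ ≤ ‖x₀ + t • x‖ + ‖x₀‖ := by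
      simpa using norm_sub_le (x₀ + t • x) x₀
    have habs : |t| * ‖x‖ ≥ R + ‖x₀‖ + 1 := by
      have : t ≤ |t| := le_abs_self t
      nlinarith
    rw [htx] at hbound
    linarith
  · intro hker
    -- positive lower bound on the sphere
    have hsph : IsCompact (Metric.sphere (0 : Fin N → ℝ) 1) := isCompact_sphere 0 1
    haveI : Nonempty (Fin N) := Fin.pos_iff_nonempty.mp hN
    haveI : Nontrivial (Fin N → ℝ) := inferInstance
    have hsphne : (Metric.sphere (0 : Fin N → ℝ) 1).Nonempty := by
      apply NormedSpace.sphere_nonempty.mpr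
      norm_num
    obtain ⟨u₀, hu₀mem, hu₀min⟩ :=
      hsph.exists_isMinOn hsphne ((continuous_lassoG Φ D lam).continuousOn)
    set c := lassoG Φ D lam u₀ with hc_def
    have hcpos : 0 < c := by
      rcases lt_or_eq_of_le (lassoG_nonneg Φ D hlam u₀) with h | h
      · exact h
      · exfalso
        have hA : ∑ i, (Φ.mulVec u₀ i) ^ 2 = 0 ∧ ∑ j, |Dᵀ.mulVec u₀ j| = 0 := by
          have h1 : (0:ℝ) ≤ ∑ i, (Φ.mulVec u₀ i) ^ 2 :=
            Finset.sum_nonneg fun i _ => sq_nonneg _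
          have h2 : (0:ℝ) ≤ ∑ j, |Dᵀ.mulVec u₀ j| :=
            Finset.sum_nonneg fun j _ => abs_nonneg _
          unfold lassoG at h
          constructor <;> nlinarith
        have hΦu : Φ.mulVec u₀ = 0 := by
          funext i
          have := (Finset.sum_eq_zero_iff_of_nonneg
            (fun i _ => sq_nonneg (Φ.mulVec u₀ i))).mp hA.1 i (Finset.mem_univ i)
          exact pow_eq_zero_iff (by norm_num) |>.mp this
        have hDu : Dᵀ.mulVec u₀ = 0 := by
          funext j
          have := (Finset.sum_eq_zero_iff_of_nonneg
            (fun j _ => abs_nonneg (Dᵀ.mulVec u₀ j))).mp hA.2 j (Finset.mem_univ j)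
          exact abs_eq_zero.mp this
        have : u₀ = 0 := hker u₀ hΦu hDu
        rw [this] at hu₀mem
        simp at hu₀mem
    -- coercivity: g x ≥ c‖x‖ when ‖x‖ ≥ 1
    have hcoer : ∀ x : Fin N → ℝ, 1 ≤ ‖x‖ → c * ‖x‖ ≤ lassoG Φ D lam x := by
      intro x hx1
      have hxn : (0:ℝ) < ‖x‖ := lt_of_lt_of_le one_pos hx1
      set r := ‖x‖ with hr_def
      set u := r⁻¹ • x with hu_def
      have hru : ‖u‖ = 1 := by
        rw [hu_def, norm_smul, Real.norm_eq_abs, abs_of_pos (inv_pos.mpr hxn)]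
        exact inv_mul_cancel₀ (ne_of_gt hxn)
      have humem : u ∈ Metric.sphere (0 : Fin N → ℝ) 1 := by
        simp [Metric.mem_sphere, dist_zero_right, hru]
      have hgu : c ≤ lassoG Φ D lam u := hu₀min humem
      have hΦu : ∀ i, Φ.mulVec u i = r⁻¹ * Φ.mulVec x i := by
        intro i
        rw [hu_def, Matrix.mulVec_smul]
        rfl
      have hDu : ∀ j, Dᵀ.mulVec u j = r⁻¹ * Dᵀ.mulVec x j := by
        intro j
        rw [hu_def, Matrix.mulVec_smul]
        rfl
      have hgueq : lassoG Φ D lam u =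
          (1 / 4) * (r⁻¹ ^ 2 * ∑ i, (Φ.mulVec x i) ^ 2) +
          lam * (r⁻¹ * ∑ j, |Dᵀ.mulVec x j|) := by
        unfold lassoG
        congr 1
        · congr 1
          rw [Finset.mul_sum]
          exact Finset.sum_congr rfl fun i _ => by rw [hΦu i]; ring
        · congr 1
          rw [Finset.mul_sum]
          refine Finset.sum_congr rfl fun j _ => ?_
          rw [hDu j, abs_mul, abs_of_pos (inv_pos.mpr hxn)]
      have hAnn : (0:ℝ) ≤ ∑ i, (Φ.mulVec x i) ^ 2 :=
        Finset.sum_nonneg fun i _ => sq_nonneg _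
      have hBnn : (0:ℝ) ≤ ∑ j, |Dᵀ.mulVec x j| :=
        Finset.sum_nonneg fun j _ => abs_nonneg _
      have hrinv : r⁻¹ ≤ 1 := by
        rw [inv_le_one_iff₀]; right; exact hx1
      have key : r * lassoG Φ D lam u ≤ lassoG Φ D lam x := by
        rw [hgueq]
        unfold lassoG
        have h1 : r * ((1 / 4) * (r⁻¹ ^ 2 * ∑ i, (Φ.mulVec x i) ^ 2)) =
            (1 / 4) * (r⁻¹ * ∑ i, (Φ.mulVec x i) ^ 2) := by
          field_simp
        have h2 : r * (lam * (r⁻¹ * ∑ j, |Dᵀ.mulVec x j|)) =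
            lam * ∑ j, |Dᵀ.mulVec x j| := by
          field_simp
        rw [mul_add, h1, h2]
        have : r⁻¹ * ∑ i, (Φ.mulVec x i) ^ 2 ≤ ∑ i, (Φ.mulVec x i) ^ 2 := by
          nlinarith
        linarith
      calc c * r = r * c := mul_comm _ _
        _ ≤ r * lassoG Φ D lam u := by
            exact mul_le_mul_of_nonneg_left hgu (le_of_lt hxn)
        _ ≤ lassoG Φ D lam x := key
    -- f tends to infinity cocompactly
    set C := (1 / 2) * ∑ i, (y i) ^ 2 with hC_def
    have hco : Filter.Tendsto f (Filter.cocompact _) Filter.atTop := by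
      rw [Filter.tendsto_atTop]
      intro b
      rw [Filter.hasBasis_cocompact.eventually_iff]
      refine ⟨Metric.closedBall 0 (max 1 ((b + C) / c)), isCompact_closedBall _ _, ?_⟩
      intro x hx
      simp only [Set.mem_compl_iff, Metric.mem_closedBall, dist_zero_right, not_le] at hx
      have hx1 : 1 ≤ ‖x‖ := le_of_lt (lt_of_le_of_lt (le_max_left _ _) hx)
      have hx2 : (b + C) / c ≤ ‖x‖ := le_of_lt (lt_of_le_of_lt (le_max_right _ _) hx)
      have h1 : b + C ≤ c * ‖x‖ := by
        rw [div_le_iff₀ hcpos] at hx2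
        linarith [mul_comm c ‖x‖]
      have h2 := hcoer x hx1
      have h3 := lassoObj_ge Φ D y lam x
      rw [← hf_def] at h3
      rw [← hC_def] at h3
      linarith
    -- existence of minimizer
    obtain ⟨x₀, hx₀⟩ := hf.exists_forall_le hco
    have hx₀sol : IsLassoSol Φ D y lam x₀ := hx₀
    refine ⟨⟨x₀, hx₀sol⟩, ?_⟩
    -- compactness
    have hclosed : IsClosed {x : Fin N → ℝ | IsLassoSol Φ D y lam x} := by
      have : {x : Fin N → ℝ | IsLassoSol Φ D y lam x} =
          ⋂ x' : Fin N → ℝ, {x | f x ≤ f x'} := by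
        ext x; simp [IsLassoSol, hf_def, Set.mem_iInter]
      rw [this]
      exact isClosed_iInter fun x' => isClosed_le hf continuous_const
    have hev := hco.eventually (Filter.eventually_ge_atTop (f x₀ + 1))
    rw [Filter.hasBasis_cocompact.eventually_iff] at hev
    obtain ⟨K, hK, hKs⟩ := hev
    refine hK.of_isClosed_subset hclosed ?_
    intro x hx
    by_contra hxK
    have := hKs hxK
    have : f x₀ + 1 ≤ f x := this
    have hle : f x ≤ f x₀ := hx x₀
    linarith
end

section
/- A vector x⋆ ∈ ℝ^N is a global minimizer of L_{y,λ} if and only if there exists σ ∈ ℝ^{|J|} with ‖σ‖_∞ ≤ 1 such that Φ*(Φ x⋆ − y) + λ D_I s_I + λ D_J σ = 0, where I is the D-support of x⋆, J = I^c its D-cosupport, and s = sign(D* x⋆). -/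
open Matrix MeasureTheory ProbabilityTheory

lemma sum_mul_mulVec {m n : ℕ} (M : Matrix (Fin m) (Fin n) ℝ) (v : Fin m → ℝ) (w : Fin n → ℝ) :
    ∑ i, v i * M.mulVec w i = ∑ j, Mᵀ.mulVec v j * w j := by
  simp only [Matrix.mulVec, dotProduct, Matrix.transpose_apply, Finset.mul_sum,
    Finset.sum_mul]
  rw [Finset.sum_comm]
  exact Finset.sum_congr rfl fun j _ => Finset.sum_congr rfl fun i _ => by ring

/-- `⟨Dσ, h⟩ = ∑ⱼ σⱼ (Dᵀh)ⱼ`. -/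
lemma sum_mulVec_mul {N P : ℕ} (D : Matrix (Fin N) (Fin P) ℝ) (σ : Fin P → ℝ)
    (h : Fin N → ℝ) : ∑ k, D.mulVec σ k * h k = ∑ j, σ j * Dᵀ.mulVec h j := by
  have h1 : ∑ k, h k * D.mulVec σ k = ∑ j, Dᵀ.mulVec h j * σ j := sum_mul_mulVec D h σ
  calc ∑ k, D.mulVec σ k * h k = ∑ k, h k * D.mulVec σ k :=
        Finset.sum_congr rfl fun k _ => mul_comm _ _
    _ = ∑ j, Dᵀ.mulVec h j * σ j := h1
    _ = ∑ j, σ j * Dᵀ.mulVec h j := Finset.sum_congr rfl fun j _ => mul_comm _ _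

lemma lassoObj_add {N Q P : ℕ} (Φ : Matrix (Fin Q) (Fin N) ℝ)
    (D : Matrix (Fin N) (Fin P) ℝ) (y : Fin Q → ℝ) (lam : ℝ) (xs h : Fin N → ℝ) :
    lassoObj Φ D y lam (xs + h) = lassoObj Φ D y lam xs
      + ∑ k, Φᵀ.mulVec (Φ.mulVec xs - y) k * h k
      + (1/2) * ∑ i, (Φ.mulVec h i)^2
      + lam * ∑ j, (|Dᵀ.mulVec xs j + Dᵀ.mulVec h j| - |Dᵀ.mulVec xs j|) := by
  have hdot : ∑ k, Φᵀ.mulVec (Φ.mulVec xs - y) k * h k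
      = ∑ i, (Φ.mulVec xs i - y i) * Φ.mulVec h i := by
    rw [← sum_mul_mulVec Φ (Φ.mulVec xs - y) h]
    exact Finset.sum_congr rfl fun i _ => by simp [Pi.sub_apply]
  unfold lassoObj
  rw [Matrix.mulVec_add, Matrix.mulVec_add, hdot]
  have h1 : ∑ i, (y i - (Φ.mulVec xs + Φ.mulVec h) i)^2
      = ∑ i, ((y i - Φ.mulVec xs i)^2 + 2*((Φ.mulVec xs i - y i) * Φ.mulVec h i)
        + (Φ.mulVec h i)^2) := by
    exact Finset.sum_congr rfl fun i _ => by simp only [Pi.add_apply]; ring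
  have h2 : ∑ j, |(Dᵀ.mulVec xs + Dᵀ.mulVec h) j|
      = ∑ j, (|Dᵀ.mulVec xs j| + (|Dᵀ.mulVec xs j + Dᵀ.mulVec h j| - |Dᵀ.mulVec xs j|)) := by
    exact Finset.sum_congr rfl fun j _ => by simp only [Pi.add_apply]; ring
  rw [h1, h2, Finset.sum_add_distrib, Finset.sum_add_distrib, Finset.sum_add_distrib]
  rw [← Finset.mul_sum]
  ring

lemma abs_real_sign (x : ℝ) : |Real.sign x| ≤ 1 := by
  rcases Real.sign_apply_eq x with h|h|h <;> rw [h] <;> norm_num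

lemma real_sign_mul_self (x : ℝ) : Real.sign x * x = |x| := by
  rcases lt_trichotomy x 0 with h|h|h
  · rw [Real.sign_of_neg h, abs_of_neg h]; ring
  · simp [h]
  · rw [Real.sign_of_pos h, abs_of_pos h]; ring

/-- Per-coordinate subgradient inequality. -/
lemma sign_subgrad (a b σ : ℝ) (hσ0 : a ≠ 0 → σ = 0) (hσ1 : |σ| ≤ 1) :
    (Real.sign a + σ) * b ≤ |a + b| - |a| := by
  rcases lt_trichotomy a 0 with h|h|h
  · rw [hσ0 h.ne, Real.sign_of_neg h, abs_of_neg h]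
    have h1 : -(a + b) ≤ |a + b| := neg_le_abs _
    nlinarith
  · subst h
    simp only [Real.sign_zero, zero_add, abs_zero, sub_zero]
    calc σ * b ≤ |σ * b| := le_abs_self _
      _ = |σ| * |b| := abs_mul _ _
      _ ≤ 1 * |b| := mul_le_mul_of_nonneg_right hσ1 (abs_nonneg _)
      _ = |b| := one_mul _
  · rw [hσ0 h.ne', Real.sign_of_pos h, abs_of_pos h]
    have h1 : a + b ≤ |a + b| := le_abs_self _
    nlinarith

/-- First-order optimality: `x⋆` is a global minimizer of `L_{y,λ}` iff there is a
vector `σ` supported on the `D`-cosupport `J` with `‖σ‖_∞ ≤ 1` such that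
`Φ*(Φx⋆ − y) + λ D_I s_I + λ D_J σ = 0`, where `s = sign(D* x⋆)`. -/
theorem lasso_first_order_optimality
    {N Q P : ℕ} (hN : 0 < N) (hQ : 0 < Q) (hP : 0 < P)
    (Φ : Matrix (Fin Q) (Fin N) ℝ) (D : Matrix (Fin N) (Fin P) ℝ)
    (y : Fin Q → ℝ) (lam : ℝ) (hlam : 0 < lam) (xs : Fin N → ℝ) :
    IsLassoSol Φ D y lam xs ↔
      ∃ σ : Fin P → ℝ,
        (∀ j, Dᵀ.mulVec xs j ≠ 0 → σ j = 0) ∧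
        (∀ j, |σ j| ≤ 1) ∧
        Φᵀ.mulVec (Φ.mulVec xs - y)
            + lam • D.mulVec (fun i => Real.sign (Dᵀ.mulVec xs i))
            + lam • D.mulVec σ = 0 := by
  constructor
  · intro hsol
    set a : Fin P → ℝ := Dᵀ.mulVec xs with ha
    set s : Fin P → ℝ := fun i => Real.sign (a i) with hs
    set g0 : Fin N → ℝ := Φᵀ.mulVec (Φ.mulVec xs - y) with hg0
    set c : Fin N → ℝ := -(g0 + lam • D.mulVec s) with hc
    haveI hPne : Nonempty (Fin P) := ⟨⟨0, hP⟩⟩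
    -- Step A: directional-derivative inequality
    have hdir : ∀ h : Fin N → ℝ,
        ∑ k, c k * h k ≤ lam * ∑ j, (if a j = 0 then |Dᵀ.mulVec h j| else 0) := by
      intro h
      set b : Fin P → ℝ := Dᵀ.mulVec h with hb
      set G : ℝ := (∑ k, g0 k * h k)
        + lam * ∑ j, (if a j = 0 then |b j| else s j * b j) with hG
      set B : ℝ := (1/2) * ∑ i, (Φ.mulVec h i)^2 with hB
      have hBnn : 0 ≤ B := by rw [hB]; positivity
      have hne : (Finset.univ : Finset (Fin P)).Nonempty := Finset.univ_nonempty
      set t0 : ℝ := Finset.univ.inf' hne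
        (fun j => if a j = 0 then 1 else |a j| / (|b j| + 1)) with ht0def
      have ht0pos : 0 < t0 := by
        rw [ht0def, Finset.lt_inf'_iff]
        intro j _
        by_cases haj : a j = 0
        · simp [haj]
        · simp only [haj, if_false]
          exact div_pos (abs_pos.2 haj) (by positivity)
      have ht0 : ∀ j, a j ≠ 0 → t0 * |b j| < |a j| := by
        intro j haj
        have hle : t0 ≤ |a j| / (|b j| + 1) := by
          rw [ht0def]
          have h2 := Finset.inf'_le (fun j => if a j = 0 then 1 else |a j| / (|b j| + 1))
            (Finset.mem_univ j)
          simp only [haj, if_false] at h2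
          exact h2
        have h2 : t0 * (|b j| + 1) ≤ |a j| := (le_div_iff₀ (by positivity)).1 hle
        nlinarith
      have key : ∀ t : ℝ, 0 < t → t ≤ t0 → 0 ≤ G + t * B := by
        intro t htpos htle
        have hstep := hsol (xs + t • h)
        rw [lassoObj_add] at hstep
        simp only [Matrix.mulVec_smul] at hstep
        rw [← hg0, ← ha, ← hb] at hstep
        have eA : ∑ k, g0 k * (t • h) k = t * ∑ k, g0 k * h k := by
          rw [Finset.mul_sum]
          exact Finset.sum_congr rfl fun k _ => by
            simp only [Pi.smul_apply, smul_eq_mul]; ring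
        have eB : (1/2) * ∑ i, ((t • Φ.mulVec h) i)^2 = t^2 * B := by
          have e : ∑ i, ((t • Φ.mulVec h) i)^2 = t^2 * ∑ i, (Φ.mulVec h i)^2 := by
            rw [Finset.mul_sum]
            exact Finset.sum_congr rfl fun i _ => by
              simp only [Pi.smul_apply, smul_eq_mul]; ring
          rw [e, hB]; ring
        have eC : ∑ j, (|a j + (t • b) j| - |a j|)
            = t * ∑ j, (if a j = 0 then |b j| else s j * b j) := by
          rw [Finset.mul_sum]
          refine Finset.sum_congr rfl fun j _ => ?_
          have hbt : (t • b) j = t * b j := by simp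
          rw [hbt]
          by_cases haj : a j = 0
          · rw [if_pos haj, haj]
            rw [zero_add, abs_zero, sub_zero, abs_mul, abs_of_pos htpos]
          · rw [if_neg haj]
            have hlt : t * |b j| < |a j| :=
              lt_of_le_of_lt (mul_le_mul_of_nonneg_right htle (abs_nonneg _)) (ht0 j haj)
            have habs : t * b j ≤ t * |b j| :=
              mul_le_mul_of_nonneg_left (le_abs_self _) htpos.le
            have habs' : -(t * |b j|) ≤ t * b j := by
              have := mul_le_mul_of_nonneg_left (neg_abs_le (b j)) htpos.le
              linarith
            rcases lt_trichotomy (a j) 0 with hneg|hzero|hpos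
            · have h1 : a j + t * b j < 0 := by
                have : |a j| = -(a j) := abs_of_neg hneg
                linarith
              rw [abs_of_neg h1, abs_of_neg hneg, hs]
              simp only [Real.sign_of_neg hneg]
              ring
            · exact absurd hzero haj
            · have h1 : 0 < a j + t * b j := by
                have : |a j| = a j := abs_of_pos hpos
                linarith
              rw [abs_of_pos h1, abs_of_pos hpos, hs]
              simp only [Real.sign_of_pos hpos]
              ring
        rw [eA, eB, eC] at hstep
        have h0 : 0 ≤ t * (∑ k, g0 k * h k) + t^2 * B
            + lam * (t * ∑ j, (if a j = 0 then |b j| else s j * b j)) := by linarith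
        by_contra hneg
        push_neg at hneg
        nlinarith [mul_pos htpos (neg_pos.2 hneg), h0]
      have hGnn : 0 ≤ G := by
        by_contra hGneg
        push_neg at hGneg
        set t : ℝ := min t0 (-G / (2*(B+1))) with htdef
        have htpos : 0 < t :=
          lt_min ht0pos (div_pos (neg_pos.2 hGneg) (by positivity))
        have h5 := key t htpos (min_le_left _ _)
        have h6 : t ≤ -G / (2*(B+1)) := min_le_right _ _
        have h7 : t * (2*(B+1)) ≤ -G := (le_div_iff₀ (by positivity)).1 h6
        nlinarith [mul_nonneg htpos.le hBnn]
      -- rearrange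
      have e1 : ∑ k, D.mulVec s k * h k = ∑ j, s j * b j := sum_mulVec_mul D s h
      have hcdot : ∑ k, c k * h k = -(∑ k, g0 k * h k) - lam * ∑ j, s j * b j := by
        calc ∑ k, c k * h k
            = ∑ k, (-(g0 k * h k) - lam * (D.mulVec s k * h k)) := by
              refine Finset.sum_congr rfl fun k _ => ?_
              rw [hc]
              simp only [Pi.neg_apply, Pi.add_apply, Pi.smul_apply, smul_eq_mul]
              ring
          _ = -(∑ k, g0 k * h k) - lam * ∑ j, s j * b j := by
              rw [Finset.sum_sub_distrib, Finset.sum_neg_distrib, ← Finset.mul_sum, e1]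
      have hsplit : ∑ j, (if a j = 0 then |b j| else s j * b j)
          = (∑ j, s j * b j) + ∑ j, (if a j = 0 then |b j| else 0) := by
        rw [← Finset.sum_add_distrib]
        refine Finset.sum_congr rfl fun j _ => ?_
        by_cases haj : a j = 0
        · simp [hs, haj, Real.sign_zero]
        · simp [haj]
      rw [hG, hsplit] at hGnn
      rw [hcdot]
      nlinarith [hGnn]
    -- Step B: separation
    set Cset : Set (Fin P → ℝ) :=
      Set.univ.pi (fun j => if a j = 0 then Set.Icc (-1:ℝ) 1 else {0}) with hCdef
    have hCconv : Convex ℝ Cset := by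
      apply convex_pi
      intro j _
      by_cases haj : a j = 0
      · rw [if_pos haj]; exact convex_Icc _ _
      · rw [if_neg haj]; exact convex_singleton _
    have hCcomp : IsCompact Cset := by
      apply isCompact_univ_pi
      intro j
      by_cases haj : a j = 0
      · rw [if_pos haj]; exact isCompact_Icc
      · rw [if_neg haj]; exact isCompact_singleton
    set Lmap : (Fin P → ℝ) →ₗ[ℝ] (Fin N → ℝ) := lam • D.mulVecLin with hL
    have hLcont : Continuous Lmap := Lmap.continuous_of_finiteDimensional
    have hKconv : Convex ℝ (Lmap '' Cset) := hCconv.linear_image Lmap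
    have hKcl : IsClosed (Lmap '' Cset) := (hCcomp.image hLcont).isClosed
    have hcK : c ∈ Lmap '' Cset := by
      by_contra hcK
      obtain ⟨f, u, hfb, hfc⟩ := geometric_hahn_banach_closed_point hKconv hKcl hcK
      set hv : Fin N → ℝ := fun k => f (fun j => if k = j then 1 else 0) with hhv
      have hfx : ∀ x : Fin N → ℝ, f x = ∑ k, x k * hv k := by
        intro x
        have := LinearMap.pi_apply_eq_sum_univ (f : (Fin N → ℝ) →ₗ[ℝ] ℝ) x
        simpa [smul_eq_mul] using this
      set σs : Fin P → ℝ := fun j => if a j = 0 then Real.sign (Dᵀ.mulVec hv j) else 0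
        with hσs
      have hmem : σs ∈ Cset := by
        intro j _
        simp only []
        by_cases haj : a j = 0
        · rw [if_pos haj]
          rw [hσs]
          simp only [haj, if_pos]
          exact ⟨(abs_le.1 (abs_real_sign _)).1, (abs_le.1 (abs_real_sign _)).2⟩
        · rw [if_neg haj]
          simp [hσs, haj]
      have h1 := hfb _ ⟨σs, hmem, rfl⟩
      have h2 : f (Lmap σs) = lam * ∑ j, (if a j = 0 then |Dᵀ.mulVec hv j| else 0) := by
        rw [hfx]
        have hLk : ∀ k, (Lmap σs) k = lam * D.mulVec σs k := fun k => by
          rw [hL]; simp [Matrix.mulVecLin_apply]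
        calc ∑ k, Lmap σs k * hv k = lam * ∑ k, D.mulVec σs k * hv k := by
              rw [Finset.mul_sum]
              exact Finset.sum_congr rfl fun k _ => by rw [hLk k]; ring
          _ = lam * ∑ j, σs j * Dᵀ.mulVec hv j := by rw [sum_mulVec_mul]
          _ = lam * ∑ j, (if a j = 0 then |Dᵀ.mulVec hv j| else 0) := by
              congr 1
              refine Finset.sum_congr rfl fun j _ => ?_
              by_cases haj : a j = 0
              · rw [hσs]; simp only [haj, if_pos, if_true]
                exact real_sign_mul_self _
              · rw [hσs]; simp [haj]
      have h3 : f c = ∑ k, c k * hv k := hfx c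
      have h4 := hdir hv
      linarith
    obtain ⟨σ, hσmem, hσeq⟩ := hcK
    refine ⟨σ, ?_, ?_, ?_⟩
    · intro j hj
      have := hσmem j (Set.mem_univ j)
      simp only [] at this
      rw [if_neg hj] at this
      exact this
    · intro j
      have := hσmem j (Set.mem_univ j)
      simp only [] at this
      by_cases haj : a j = 0
      · rw [if_pos haj] at this
        exact abs_le.2 ⟨this.1, this.2⟩
      · rw [if_neg haj] at this
        simp only [Set.mem_singleton_iff] at this
        simp [this]
    · have hLσ : lam • D.mulVec σ = c := by
        rw [← hσeq, hL]; simp [Matrix.mulVecLin_apply]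
      rw [hLσ, hc]
      abel
  · rintro ⟨σ, hσ0, hσ1, heq⟩
    intro x'
    have hx : x' = xs + (x' - xs) := by abel
    rw [hx, lassoObj_add]
    set h : Fin N → ℝ := x' - xs with hh
    set a : Fin P → ℝ := Dᵀ.mulVec xs with ha
    set b : Fin P → ℝ := Dᵀ.mulVec h with hb
    set s : Fin P → ℝ := fun i => Real.sign (a i) with hs
    -- the stationarity equation rewritten
    have hg : ∀ k, Φᵀ.mulVec (Φ.mulVec xs - y) k
        = -(lam * D.mulVec s k + lam * D.mulVec σ k) := by
      intro k
      have := congrFun heq k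
      simp only [Pi.add_apply, Pi.smul_apply, smul_eq_mul, Pi.zero_apply] at this
      linarith [this]
    have hdot : ∑ k, Φᵀ.mulVec (Φ.mulVec xs - y) k * h k
        = -(lam * ∑ j, (s j + σ j) * b j) := by
      have e1 : ∑ k, D.mulVec s k * h k = ∑ j, s j * b j := sum_mulVec_mul D s h
      have e2 : ∑ k, D.mulVec σ k * h k = ∑ j, σ j * b j := sum_mulVec_mul D σ h
      have e3 : ∑ j, (s j + σ j) * b j
          = (∑ k, D.mulVec s k * h k) + (∑ k, D.mulVec σ k * h k) := by
        rw [e1, e2, ← Finset.sum_add_distrib]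
        exact Finset.sum_congr rfl fun j _ => by ring
      rw [e3, ← Finset.sum_add_distrib, Finset.mul_sum, ← Finset.sum_neg_distrib]
      exact Finset.sum_congr rfl fun k _ => by rw [hg k]; ring
    rw [hdot]
    have hkey : ∑ j, (s j + σ j) * b j ≤ ∑ j, (|a j + b j| - |a j|) :=
      Finset.sum_le_sum fun j _ => sign_subgrad (a j) (b j) (σ j) (hσ0 j) (hσ1 j)
    have hB : 0 ≤ (1/2) * ∑ i, (Φ.mulVec h i)^2 := by positivity
    have := mul_le_mul_of_nonneg_left hkey hlam.le
    linarith
end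

section
/- Let x⋆ be a solution of (P_λ(y)) with D-support I, D-cosupport J and s = sign(D* x⋆). If (H_J) holds, then x⋆ satisfies the implicit equation x⋆ = A^[J] Φ* y − λ A^[J] D_I s_I. -/
open Matrix MeasureTheory ProbabilityTheory

/-- The cospace `G_J = Ker D_J^*`. -/
def GJ {N P : ℕ} (D : Matrix (Fin N) (Fin P) ℝ) (J : Set (Fin P)) :
    Submodule ℝ (Fin N → ℝ) where
  carrier := {x | ∀ j ∈ J, Dᵀ.mulVec x j = 0}
  add_mem' := by
    intro a b ha hb j hj
    simp [Matrix.mulVec_add, ha j hj, hb j hj]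
  zero_mem' := by intro j hj; simp
  smul_mem' := by
    intro c a ha j hj
    simp [Matrix.mulVec_smul, ha j hj]

/-- Condition `(H_J)`: `Ker Φ ∩ G_J = {0}`. -/
def HJcond {N Q P : ℕ} (Φ : Matrix (Fin Q) (Fin N) ℝ) (D : Matrix (Fin N) (Fin P) ℝ)
    (J : Set (Fin P)) : Prop :=
  ∀ x : Fin N → ℝ, Φ.mulVec x = 0 → x ∈ GJ D J → x = 0

/-- The columns of `U` form a basis of the subspace `G`. -/
def ColBasis {N r : ℕ} (U : Matrix (Fin N) (Fin r) ℝ) (G : Submodule ℝ (Fin N → ℝ)) : Prop :=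
  LinearIndependent ℝ (fun k : Fin r => (fun i => U i k)) ∧
  Submodule.span ℝ (Set.range (fun k : Fin r => (fun i => U i k))) = G

/-- The matrix `A^[J] = U (U* Φ* Φ U)⁻¹ U*` built from a basis matrix `U` of `G_J`. -/
noncomputable def AJmat {N Q r : ℕ} (Φ : Matrix (Fin Q) (Fin N) ℝ)
    (U : Matrix (Fin N) (Fin r) ℝ) : Matrix (Fin N) (Fin N) ℝ :=
  U * (Uᵀ * Φᵀ * Φ * U)⁻¹ * Uᵀ

lemma aux_a_eq_zero (a b t0 : ℝ) (hb : 0 ≤ b) (ht0 : 0 < t0)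
    (h : ∀ t : ℝ, |t| < t0 → 0 ≤ t * a + t ^ 2 * b) : a = 0 := by
  by_contra ha
  have hab : 0 < |a| := abs_pos.mpr ha
  set m : ℝ := min (t0 / 2) (|a| / (2 * (b + 1))) with hm
  have hm0 : 0 < m := lt_min (by linarith) (by positivity)
  set t : ℝ := -(Real.sign a) * m with ht
  have hsa : |Real.sign a| = 1 := by
    rcases lt_trichotomy a 0 with h1 | h1 | h1
    · simp [Real.sign_of_neg h1]
    · exact absurd h1 ha
    · simp [Real.sign_of_pos h1]
  have htabs : |t| = m := by
    rw [ht, abs_mul, abs_neg, hsa, one_mul, abs_of_pos hm0]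
  have hlt : |t| < t0 := by
    rw [htabs]
    calc m ≤ t0/2 := min_le_left _ _
    _ < t0 := by linarith
  have hkey := h t hlt
  have hta : t * a = -(m * |a|) := by
    rw [ht]
    rcases lt_trichotomy a 0 with h1 | h1 | h1
    · rw [Real.sign_of_neg h1, abs_of_neg h1]; ring
    · exact absurd h1 ha
    · rw [Real.sign_of_pos h1, abs_of_pos h1]; ring
  have ht2 : t ^ 2 = m ^ 2 := by
    have : |t|^2 = t^2 := sq_abs t
    rw [← this, htabs]
  rw [hta, ht2] at hkey
  have hmb : m * b ≤ |a| / 2 := by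
    have h1 : m ≤ |a| / (2 * (b + 1)) := min_le_right _ _
    have h2 : m * b ≤ (|a| / (2 * (b + 1))) * b :=
      mul_le_mul_of_nonneg_right h1 hb
    have h3 : (|a| / (2 * (b + 1))) * b ≤ |a| / 2 := by
      rw [div_mul_eq_mul_div, div_le_div_iff₀ (by positivity) (by norm_num)]
      nlinarith
    linarith
  nlinarith [sq_nonneg m, hm0]

lemma aux_abs_add (u v : ℝ) (h : |v| < |u|) : |u + v| = |u| + Real.sign u * v := by
  have hb := abs_lt.mp h
  rcases lt_trichotomy u 0 with h1 | h1 | h1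
  · rw [abs_of_neg h1] at hb
    rw [Real.sign_of_neg h1, abs_of_neg h1, abs_of_neg (by linarith : u + v < 0)]; ring
  · rw [h1, abs_zero] at h; exact absurd h (by simp [abs_nonneg])
  · rw [abs_of_pos h1] at hb
    rw [Real.sign_of_pos h1, abs_of_pos h1, abs_of_pos (by linarith : 0 < u + v)]; ring

lemma aux_sum_sq_expand {Q : ℕ} (A B : Fin Q → ℝ) (t : ℝ) :
    ∑ i, (A i - t * B i) ^ 2
      = ∑ i, A i ^ 2 - 2 * t * ∑ i, A i * B i + t ^ 2 * ∑ i, B i ^ 2 := by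
  have h : ∀ i, (A i - t * B i) ^ 2
      = A i ^ 2 - 2 * t * (A i * B i) + t ^ 2 * B i ^ 2 := fun i => by ring
  simp_rw [h, Finset.sum_add_distrib, Finset.sum_sub_distrib, ← Finset.mul_sum]

lemma aux_opt {N Q P : ℕ} (hP : 0 < P) (Φ : Matrix (Fin Q) (Fin N) ℝ)
    (D : Matrix (Fin N) (Fin P) ℝ) (y : Fin Q → ℝ) (lam : ℝ) (xs : Fin N → ℝ)
    (hxs : IsLassoSol Φ D y lam xs)
    (J : Set (Fin P)) (hJ : J = {j | Dᵀ.mulVec xs j = 0})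
    (h : Fin N → ℝ) (hh : h ∈ GJ D J) :
    ∑ i, (Φ.mulVec xs i - y i) * Φ.mulVec h i
      + lam * ∑ j, Real.sign (Dᵀ.mulVec xs j) * Dᵀ.mulVec h j = 0 := by
  haveI : Nonempty (Fin P) := Fin.pos_iff_nonempty.mp hP
  have hh' : ∀ j ∈ J, Dᵀ.mulVec h j = 0 := hh
  set u := Dᵀ.mulVec xs with hu
  set w := Dᵀ.mulVec h with hw
  set a := ∑ i, (Φ.mulVec xs i - y i) * Φ.mulVec h i
      + lam * ∑ j, Real.sign (u j) * w j with ha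
  set b := (1/2) * ∑ i, (Φ.mulVec h i)^2 with hbdef
  have hb : 0 ≤ b := by positivity
  set g : Fin P → ℝ := fun i => if u i = 0 then 1 else |u i| with hg
  set δ := Finset.univ.inf' Finset.univ_nonempty g with hδdef
  have hδ : 0 < δ := by
    rw [hδdef, Finset.lt_inf'_iff]
    intro i _
    by_cases hi : u i = 0 <;> simp [hg, hi, abs_pos]
  set C := (∑ i, |w i|) + 1 with hC0
  have hC : 0 < C := by positivity
  have key : ∀ t : ℝ, |t| < δ / C → 0 ≤ t * a + t^2 * b := by
    intro t ht
    have hobj := hxs (xs + t • h)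
    have habs : ∀ j, |u j + t * w j| = |u j| + Real.sign (u j) * (t * w j) := by
      intro j
      by_cases hj : u j = 0
      · have hwj : w j = 0 := hh' j (by rw [hJ]; exact hj)
        simp [hj, hwj]
      · apply aux_abs_add
        have h1 : |w j| ≤ C := by
          have := Finset.single_le_sum (f := fun i => |w i|)
            (fun i _ => abs_nonneg _) (Finset.mem_univ j)
          rw [hC0]; linarith
        have h2 : δ ≤ |u j| := by
          have h3 : δ ≤ g j := Finset.inf'_le g (Finset.mem_univ j)
          simpa [hg, hj] using h3
        calc |t * w j| = |t| * |w j| := abs_mul _ _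
          _ ≤ |t| * C := by nlinarith [abs_nonneg t]
          _ < (δ / C) * C := mul_lt_mul_of_pos_right ht hC
          _ = δ := div_mul_cancel₀ _ (ne_of_gt hC)
          _ ≤ |u j| := h2
    have hΦ : Φ.mulVec (xs + t • h) = fun i => Φ.mulVec xs i + t * Φ.mulVec h i := by
      funext i
      simp [Matrix.mulVec_add, Matrix.mulVec_smul]
    have hD : Dᵀ.mulVec (xs + t • h) = fun j => u j + t * w j := by
      funext j
      simp [Matrix.mulVec_add, Matrix.mulVec_smul, hu, hw]
    have e1 : ∑ i, (y i - Φ.mulVec (xs + t • h) i) ^ 2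
        = ∑ i, (y i - Φ.mulVec xs i) ^ 2
          - 2 * t * ∑ i, (y i - Φ.mulVec xs i) * Φ.mulVec h i
          + t ^ 2 * ∑ i, (Φ.mulVec h i) ^ 2 := by
      have h5 : ∀ i, y i - Φ.mulVec (xs + t • h) i
          = (y i - Φ.mulVec xs i) - t * Φ.mulVec h i := by
        intro i; rw [hΦ]; ring
      simp_rw [h5]
      exact aux_sum_sq_expand _ _ t
    have e2 : ∑ j, |Dᵀ.mulVec (xs + t • h) j|
        = ∑ j, |u j| + t * ∑ j, Real.sign (u j) * w j := by
      rw [hD]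
      simp_rw [habs]
      rw [Finset.sum_add_distrib, Finset.mul_sum]
      congr 1
      exact Finset.sum_congr rfl fun j _ => by ring
    have hswap : ∑ i, (Φ.mulVec xs i - y i) * Φ.mulVec h i
        = -∑ i, (y i - Φ.mulVec xs i) * Φ.mulVec h i := by
      rw [← Finset.sum_neg_distrib]
      exact Finset.sum_congr rfl fun i _ => by ring
    have hexp : lassoObj Φ D y lam (xs + t • h)
        = lassoObj Φ D y lam xs + (t * a + t ^ 2 * b) := by
      simp only [lassoObj]
      rw [e1, e2, ha, hbdef, hswap, ← hu]
      ring
    rw [hexp] at hobj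
    linarith
  have := aux_a_eq_zero a b (δ / C) hb (div_pos hδ hC) (by simpa [sq] using key)
  exact this

/-- Implicit equation: a solution `x⋆` of `(P_λ(y))` with `D`-cosupport `J` satisfying
`(H_J)` obeys `x⋆ = A^[J] Φ* y − λ A^[J] D_I s_I` where `s = sign(D* x⋆)`. -/
theorem lasso_implicit_equation
    {N Q P : ℕ} (hN : 0 < N) (hQ : 0 < Q) (hP : 0 < P)
    (Φ : Matrix (Fin Q) (Fin N) ℝ) (D : Matrix (Fin N) (Fin P) ℝ)
    (y : Fin Q → ℝ) (lam : ℝ) (hlam : 0 < lam)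
    (xs : Fin N → ℝ) (hxs : IsLassoSol Φ D y lam xs)
    (J : Set (Fin P)) (hJ : J = {j | Dᵀ.mulVec xs j = 0})
    (hHJ : HJcond Φ D J)
    (r : ℕ) (U : Matrix (Fin N) (Fin r) ℝ) (hU : ColBasis U (GJ D J)) :
    xs = (AJmat Φ U).mulVec (Φᵀ.mulVec y)
        - lam • (AJmat Φ U).mulVec (D.mulVec (fun i => Real.sign (Dᵀ.mulVec xs i))) := by
  classical
  set s : Fin P → ℝ := fun i => Real.sign (Dᵀ.mulVec xs i) with hs
  set M := Uᵀ * Φᵀ * Φ * U with hM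
  have hcol : ∀ k : Fin r, (fun i => U i k) ∈ GJ D J := fun k => by
    rw [← hU.2]; exact Submodule.subset_span (Set.mem_range_self k)
  have hUv : ∀ c : Fin r → ℝ, U *ᵥ c = ∑ k, c k • (fun i => U i k) := by
    intro c; funext i
    simp [Matrix.mulVec, dotProduct, Finset.sum_apply, mul_comm]
  have hUmem : ∀ c : Fin r → ℝ, U *ᵥ c ∈ GJ D J := by
    intro c; rw [hUv]
    exact Submodule.sum_mem _ fun k _ => Submodule.smul_mem _ _ (hcol k)
  have hxsG : xs ∈ GJ D J := by
    show ∀ j ∈ J, Dᵀ.mulVec xs j = 0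
    intro j hj; rw [hJ] at hj; exact hj
  have hxspan : xs ∈ Submodule.span ℝ (Set.range (fun k : Fin r => (fun i => U i k))) := by
    rw [hU.2]; exact hxsG
  obtain ⟨c, hc⟩ := (Submodule.mem_span_range_iff_exists_fun ℝ).mp hxspan
  have hxc : U *ᵥ c = xs := by rw [hUv]; exact hc
  have hvdot : ∀ h ∈ GJ D J,
      (Φᵀ *ᵥ (Φ *ᵥ xs) - Φᵀ *ᵥ y + lam • (D *ᵥ s)) ⬝ᵥ h = 0 := by
    intro h hh
    have hopt := aux_opt hP Φ D y lam xs hxs J hJ h hh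
    have e1 : ∑ i, (Φ.mulVec xs i - y i) * Φ.mulVec h i
        = (Φᵀ *ᵥ (Φ *ᵥ xs) - Φᵀ *ᵥ y) ⬝ᵥ h := by
      have e1' : (Φ *ᵥ xs - y) ⬝ᵥ (Φ *ᵥ h) = (Φᵀ *ᵥ (Φ *ᵥ xs - y)) ⬝ᵥ h := by
        rw [Matrix.dotProduct_mulVec, Matrix.mulVec_transpose]
      rw [Matrix.mulVec_sub] at e1'
      rw [← e1']; simp [dotProduct]
    have e2 : ∑ j, Real.sign (Dᵀ.mulVec xs j) * Dᵀ.mulVec h j = (D *ᵥ s) ⬝ᵥ h := by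
      have e2' : s ⬝ᵥ (Dᵀ *ᵥ h) = (D *ᵥ s) ⬝ᵥ h := by
        rw [Matrix.dotProduct_mulVec, Matrix.vecMul_transpose]
      rw [← e2']; simp [dotProduct, hs]
    rw [add_dotProduct, smul_dotProduct, smul_eq_mul, ← e1, ← e2]
    exact hopt
  have hUtv : Uᵀ *ᵥ (Φᵀ *ᵥ (Φ *ᵥ xs) - Φᵀ *ᵥ y + lam • (D *ᵥ s)) = 0 := by
    funext k
    have ekey : ∀ v : Fin N → ℝ, (Uᵀ *ᵥ v) k = v ⬝ᵥ (fun i => U i k) := by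
      intro v
      simp [Matrix.mulVec, dotProduct, Matrix.transpose_apply, mul_comm]
    rw [Pi.zero_apply, ekey]
    exact hvdot _ (hcol k)
  have hdet : IsUnit M.det := by
    rw [isUnit_iff_ne_zero]
    intro h0
    obtain ⟨w, hw0, hwM⟩ := Matrix.exists_mulVec_eq_zero_iff.mpr h0
    have h1 : w ⬝ᵥ (M *ᵥ w) = 0 := by rw [hwM]; simp
    have h2 : w ⬝ᵥ (M *ᵥ w) = (Φ *ᵥ (U *ᵥ w)) ⬝ᵥ (Φ *ᵥ (U *ᵥ w)) := by
      rw [hM, ← Matrix.mulVec_mulVec, ← Matrix.mulVec_mulVec, ← Matrix.mulVec_mulVec]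
      rw [Matrix.dotProduct_mulVec w Uᵀ, Matrix.vecMul_transpose]
      rw [Matrix.dotProduct_mulVec _ Φᵀ, Matrix.vecMul_transpose]
    have h3 : Φ *ᵥ (U *ᵥ w) = 0 := dotProduct_self_eq_zero.mp (h2 ▸ h1)
    have h4 : U *ᵥ w = 0 := hHJ _ h3 (hUmem w)
    have h5 := Fintype.linearIndependent_iff.mp hU.1 w (by rw [← hUv]; exact h4)
    exact hw0 (funext fun k => h5 k)
  have hkey : M *ᵥ c = Uᵀ *ᵥ (Φᵀ *ᵥ y) - lam • (Uᵀ *ᵥ (D *ᵥ s)) := by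
    have h6 := hUtv
    rw [Matrix.mulVec_add, Matrix.mulVec_sub, Matrix.mulVec_smul] at h6
    have h7 : Uᵀ *ᵥ (Φᵀ *ᵥ (Φ *ᵥ xs)) = M *ᵥ c := by
      rw [hM, ← hxc, ← Matrix.mulVec_mulVec, ← Matrix.mulVec_mulVec,
        ← Matrix.mulVec_mulVec]
    rw [h7] at h6
    have h8 := eq_neg_of_add_eq_zero_left h6
    rw [sub_eq_iff_eq_add] at h8
    rw [h8]; abel
  have hAJ : ∀ wv : Fin N → ℝ, (AJmat Φ U) *ᵥ wv = U *ᵥ (M⁻¹ *ᵥ (Uᵀ *ᵥ wv)) := by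
    intro wv
    simp only [AJmat, hM, Matrix.mulVec_mulVec, Matrix.mul_assoc]
  have hMinv : ∀ d : Fin r → ℝ, M⁻¹ *ᵥ (M *ᵥ d) = d := by
    intro d
    rw [Matrix.mulVec_mulVec, Matrix.nonsing_inv_mul M hdet, Matrix.one_mulVec]
  rw [hAJ, hAJ, ← Matrix.mulVec_smul U, ← Matrix.mulVec_sub U,
    ← Matrix.mulVec_smul M⁻¹, ← Matrix.mulVec_sub M⁻¹, ← hkey, hMinv, hxc]
end

section
/- If x₁ and x₂ are both global minimizers of L_{y,λ}, then Φ x₁ = Φ x₂. Consequently the prediction μ_λ(y) = Φ x⋆, for x⋆ any solution of (P_λ(y)), is a well-defined single-valued function of y. -/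
open Matrix MeasureTheory ProbabilityTheory

/-- All global minimizers of `L_{y,λ}` share the same image under `Φ`, so the prediction
`μ_λ(y) = Φ x⋆` is a well-defined single-valued function of `y`. -/
theorem lasso_unique_image
    {N Q P : ℕ} (hN : 0 < N) (hQ : 0 < Q) (hP : 0 < P)
    (Φ : Matrix (Fin Q) (Fin N) ℝ) (D : Matrix (Fin N) (Fin P) ℝ)
    (y : Fin Q → ℝ) (lam : ℝ) (hlam : 0 < lam)
    (x1 x2 : Fin N → ℝ)
    (h1 : IsLassoSol Φ D y lam x1) (h2 : IsLassoSol Φ D y lam x2) :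
    Φ.mulVec x1 = Φ.mulVec x2 := by
  set u := Φ.mulVec x1 with hu
  set v := Φ.mulVec x2 with hv
  set w1 := Dᵀ.mulVec x1 with hw1
  set w2 := Dᵀ.mulVec x2 with hw2
  set m : Fin N → ℝ := fun i => (x1 i + x2 i) / 2 with hm
  have hΦm : ∀ i, Φ.mulVec m i = (u i + v i) / 2 := by
    intro i
    simp only [hm, hu, hv, mulVec, dotProduct]
    rw [← Finset.sum_add_distrib, Finset.sum_div]
    exact Finset.sum_congr rfl fun j _ => by ring
  have hDm : ∀ j, Dᵀ.mulVec m j = (w1 j + w2 j) / 2 := by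
    intro j
    simp only [hm, hw1, hw2, mulVec, dotProduct]
    rw [← Finset.sum_add_distrib, Finset.sum_div]
    exact Finset.sum_congr rfl fun i _ => by ring
  set S1 := ∑ i, (y i - u i) ^ 2 with hS1
  set S2 := ∑ i, (y i - v i) ^ 2 with hS2
  set Sd := ∑ i, (u i - v i) ^ 2 with hSd
  set T1 := ∑ j, |w1 j| with hT1
  set T2 := ∑ j, |w2 j| with hT2
  -- quadratic part at the midpoint
  have hquad : ∑ i, (y i - Φ.mulVec m i) ^ 2 = S1 / 2 + S2 / 2 - Sd / 4 := by
    have : ∀ i ∈ Finset.univ, (y i - Φ.mulVec m i) ^ 2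
        = (y i - u i) ^ 2 / 2 + (y i - v i) ^ 2 / 2 - (u i - v i) ^ 2 / 4 := by
      intro i _
      rw [hΦm i]; ring
    rw [Finset.sum_congr rfl this, hS1, hS2, hSd]
    rw [Finset.sum_sub_distrib, Finset.sum_add_distrib, Finset.sum_div, Finset.sum_div,
      Finset.sum_div]
  -- l1 part at the midpoint
  have hl1 : ∑ j, |Dᵀ.mulVec m j| ≤ (T1 + T2) / 2 := by
    have : ∀ j ∈ Finset.univ, |Dᵀ.mulVec m j| ≤ |w1 j| / 2 + |w2 j| / 2 := by
      intro j _
      rw [hDm j]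
      calc |(w1 j + w2 j) / 2| = |w1 j + w2 j| / 2 := by
            rw [abs_div]; norm_num
        _ ≤ (|w1 j| + |w2 j|) / 2 := by
            have := abs_add_le (w1 j) (w2 j); linarith
        _ = |w1 j| / 2 + |w2 j| / 2 := by ring
    calc ∑ j, |Dᵀ.mulVec m j| ≤ ∑ j, (|w1 j| / 2 + |w2 j| / 2) := Finset.sum_le_sum this
      _ = (T1 + T2) / 2 := by
          rw [Finset.sum_add_distrib, hT1, hT2, ← Finset.sum_div, ← Finset.sum_div]; ring
  have heq : (1 / 2) * S1 + lam * T1 = (1 / 2) * S2 + lam * T2 := by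
    have ha := h1 x2
    have hb := h2 x1
    simp only [lassoObj, ← hu, ← hv, ← hw1, ← hw2, ← hS1, ← hS2, ← hT1, ← hT2] at ha hb
    linarith
  have hkey := h1 m
  simp only [lassoObj, ← hu, ← hw1, ← hS1, ← hT1] at hkey
  rw [hquad] at hkey
  have hl1' : lam * (∑ j, |Dᵀ.mulVec m j|) ≤ lam * ((T1 + T2) / 2) :=
    mul_le_mul_of_nonneg_left hl1 hlam.le
  have hSd_le : Sd ≤ 0 := by linarith
  have hSd_eq : ∀ i ∈ Finset.univ, (u i - v i) ^ 2 = 0 := by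
    rw [← Finset.sum_eq_zero_iff_of_nonneg fun i _ => sq_nonneg (u i - v i)]
    have : (0:ℝ) ≤ Sd := Finset.sum_nonneg fun i _ => sq_nonneg _
    linarith
  funext i
  have := hSd_eq i (Finset.mem_univ i)
  have := pow_eq_zero_iff (n := 2) (by norm_num) |>.mp this
  have : u i = v i := by linarith [sub_eq_zero.mp this]
  exact this
end

section
/- For every fixed λ > 0, the λ-restricted transition space H_{·,λ} = {y ∈ ℝ^Q : (y, λ) ∈ H} has Lebesgue measure zero in ℝ^Q. -/
open Matrix MeasureTheory ProbabilityTheory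

/-- Orthogonal projection onto a subspace of `Fin n → ℝ` (Euclidean inner product). -/
noncomputable def projG {n : ℕ} (G : Submodule ℝ (Fin n → ℝ)) (v : Fin n → ℝ) : Fin n → ℝ :=
  (EuclideanSpace.equiv (Fin n) ℝ)
    (Submodule.orthogonalProjection
      (G.map ((EuclideanSpace.equiv (Fin n) ℝ).symm.toLinearEquiv :
          (Fin n → ℝ) →ₗ[ℝ] EuclideanSpace ℝ (Fin n)))
      ((EuclideanSpace.equiv (Fin n) ℝ).symm v))

/-- `AJ` is a valid assignment of the matrix `A^[J]` to each `J` satisfying `(H_J)`;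
the value of `A^[J]` does not depend on the choice of basis matrix `U`. -/
def IsAJChoice {N Q P : ℕ} (Φ : Matrix (Fin Q) (Fin N) ℝ) (D : Matrix (Fin N) (Fin P) ℝ)
    (AJ : Set (Fin P) → Matrix (Fin N) (Fin N) ℝ) : Prop :=
  ∀ J : Set (Fin P), HJcond Φ D J →
    ∃ (r : ℕ) (U : Matrix (Fin N) (Fin r) ℝ), ColBasis U (GJ D J) ∧ AJ J = AJmat Φ U

/-- `Im D_S`: the span of the columns of `D` indexed by `S`, as a set of vectors. -/
def colSpan {N P : ℕ} (D : Matrix (Fin N) (Fin P) ℝ) (S : Set (Fin P)) : Set (Fin N → ℝ) :=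
  {w | ∃ v : Fin P → ℝ, (∀ i, i ∉ S → v i = 0) ∧ w = D.mulVec v}

/-- The transition space `H ⊆ ℝ^Q × ℝ₊`: union over `J` satisfying `(H_J)`, `K ⊆ J` with
`Im Π̃^[J] ⊄ Im D_{J∖K}`, and sign vectors `s` on `J^c` and `σ` on `K`, of the sets where
`Proj_{G_{J∖K}}(Π̃^[J] y) = Proj_{G_{J∖K}}(λ(C̃^[J] s_{J^c} − D_K σ_K))`. -/
noncomputable def transitionSpace {N Q P : ℕ} (Φ : Matrix (Fin Q) (Fin N) ℝ)
    (D : Matrix (Fin N) (Fin P) ℝ) (AJ : Set (Fin P) → Matrix (Fin N) (Fin N) ℝ) :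
    Set ((Fin Q → ℝ) × ℝ) :=
  {p | 0 ≤ p.2 ∧
    ∃ (J K : Set (Fin P)) (s σ : Fin P → ℝ),
      HJcond Φ D J ∧ K ⊆ J ∧
      ¬ (Set.range (Φᵀ * (Φ * AJ J * Φᵀ - 1)).mulVec ⊆ colSpan D (J \ K)) ∧
      (∀ i, i ∉ J → s i = 1 ∨ s i = -1) ∧ (∀ i ∈ J, s i = 0) ∧
      (∀ i ∈ K, σ i = 1 ∨ σ i = -1) ∧ (∀ i, i ∉ K → σ i = 0) ∧
      projG (GJ D (J \ K)) ((Φᵀ * (Φ * AJ J * Φᵀ - 1)).mulVec p.1)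
        = projG (GJ D (J \ K))
            (p.2 • ((Φᵀ * Φ * AJ J - 1).mulVec (D.mulVec s) - D.mulVec σ))}


/-! ### Auxiliary lemmas for the proof -/

/-- A nonzero linear functional's level sets are Lebesgue-null. -/
lemma levelset_null {n : ℕ} (f : (Fin n → ℝ) →ₗ[ℝ] ℝ) (hf : f ≠ 0) (c : ℝ) :
    MeasureTheory.volume {y : Fin n → ℝ | f y = c} = 0 := by
  rcases Set.eq_empty_or_nonempty {y : Fin n → ℝ | f y = c} with h | ⟨y₁, hy₁⟩
  · simp [h]
  · have hset : {y : Fin n → ℝ | f y = c}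
        = (· + (-y₁)) ⁻¹' (LinearMap.ker f : Set (Fin n → ℝ)) := by
      ext y
      simp only [Set.mem_setOf_eq, Set.mem_preimage, SetLike.mem_coe, LinearMap.mem_ker, map_add,
        map_neg]
      constructor
      · intro h; rw [h, hy₁]; ring
      · intro h; have := hy₁; simp only [Set.mem_setOf_eq] at this; linarith
    rw [hset, measure_preimage_add_right]
    exact MeasureTheory.Measure.addHaar_submodule MeasureTheory.volume _
      (fun h => hf (LinearMap.ker_eq_top.mp h))

/-- `projG` as a linear map. -/
noncomputable def projGLin {n : ℕ} (G : Submodule ℝ (Fin n → ℝ)) :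
    (Fin n → ℝ) →ₗ[ℝ] (Fin n → ℝ) :=
  ((EuclideanSpace.equiv (Fin n) ℝ).toLinearEquiv :
      EuclideanSpace ℝ (Fin n) →ₗ[ℝ] (Fin n → ℝ)) ∘ₗ
    ((G.map ((EuclideanSpace.equiv (Fin n) ℝ).symm.toLinearEquiv :
          (Fin n → ℝ) →ₗ[ℝ] EuclideanSpace ℝ (Fin n))).subtype ∘ₗ
      (Submodule.orthogonalProjection (G.map ((EuclideanSpace.equiv (Fin n) ℝ).symm.toLinearEquiv :
          (Fin n → ℝ) →ₗ[ℝ] EuclideanSpace ℝ (Fin n)))).toLinearMap) ∘ₗ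
    ((EuclideanSpace.equiv (Fin n) ℝ).symm.toLinearEquiv :
      (Fin n → ℝ) →ₗ[ℝ] EuclideanSpace ℝ (Fin n))

lemma projGLin_apply {n : ℕ} (G : Submodule ℝ (Fin n → ℝ)) (v : Fin n → ℝ) :
    projGLin G v = projG G v := rfl

/-- If the projection onto `G_S` of `v` vanishes then `v` is in the span of the
columns of `D` indexed by `S`. -/
lemma mem_colSpan_of_projG_zero {N P : ℕ} (D : Matrix (Fin N) (Fin P) ℝ) (S : Set (Fin P))
    (v : Fin N → ℝ) (h : projG (GJ D S) v = 0) : v ∈ colSpan D S := by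
  classical
  set e := EuclideanSpace.equiv (Fin N) ℝ with he
  set G' : Submodule ℝ (EuclideanSpace ℝ (Fin N)) :=
    (GJ D S).map ((e.symm.toLinearEquiv : (Fin N → ℝ) →ₗ[ℝ] EuclideanSpace ℝ (Fin N))) with hG'
  have h0 : Submodule.orthogonalProjection G' (e.symm v) = 0 := by
    have hc : (↑(Submodule.orthogonalProjection G' (e.symm v)) : EuclideanSpace ℝ (Fin N)) = 0 := by
      have h2 : e.symm (e (↑(Submodule.orthogonalProjection G' (e.symm v)))) = e.symm 0 := by
        unfold projG at h
        rw [h]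
      simpa using h2
    exact Subtype.ext hc
  have hperp : e.symm v ∈ G'ᗮ := by
    rwa [← Submodule.orthogonalProjectionOnto_eq_zero_iff]
  set W : Submodule ℝ (EuclideanSpace ℝ (Fin N)) :=
    Submodule.span ℝ ((fun j => e.symm (fun i => D i j)) '' S) with hW
  have hGW : G' = Wᗮ := by
    ext x
    constructor
    · rintro ⟨u, hu, rfl⟩
      intro w hw
      refine Submodule.span_induction ?_ ?_ ?_ ?_ hw
      · rintro w ⟨j, hj, rfl⟩
        have := hu j hj
        simp only [PiLp.inner_apply, RCLike.inner_apply]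
        simp only [Matrix.mulVec, dotProduct, Matrix.transpose_apply] at this
        simpa [mul_comm, he] using this
      · simp
      · intro a b _ _ ha hb; rw [inner_add_left, ha, hb]; ring
      · intro c a _ ha; rw [inner_smul_left, ha]; ring
    · intro hx
      refine ⟨e x, ?_, e.symm_apply_apply x⟩
      intro j hj
      have hgen : e.symm (fun i => D i j) ∈
          ((fun j => e.symm (fun i => D i j)) '' S : Set (EuclideanSpace ℝ (Fin N))) :=
        ⟨j, hj, rfl⟩
      have := hx _ (Submodule.subset_span hgen)
      simp only [PiLp.inner_apply, RCLike.inner_apply] at this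
      simp only [Matrix.mulVec, dotProduct, Matrix.transpose_apply]
      simpa [mul_comm, he] using this
  have hvW : e.symm v ∈ W := by
    rw [hGW, Submodule.orthogonal_orthogonal] at hperp
    exact hperp
  have hWcol : ∀ z ∈ W, e z ∈ colSpan D S := by
    intro z hz
    refine Submodule.span_induction ?_ ?_ ?_ ?_ hz
    · rintro z ⟨j, hj, rfl⟩
      refine ⟨Pi.single j 1, fun i hi => ?_, ?_⟩
      · exact Pi.single_eq_of_ne (fun hij => hi (by rwa [hij])) 1
      · ext i
        simp [Matrix.mulVec_single]
    · exact ⟨0, fun _ _ => rfl, by simp⟩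
    · rintro a b _ _ ⟨va, hva, hae⟩ ⟨vb, hvb, hbe⟩
      exact ⟨va + vb, fun i hi => by simp [hva i hi, hvb i hi],
        by simp [Matrix.mulVec_add, ← hae, ← hbe]⟩
    · rintro c a _ ⟨va, hva, hae⟩
      exact ⟨c • va, fun i hi => by simp [hva i hi],
        by simp [Matrix.mulVec_smul, ← hae]⟩
  have := hWcol _ hvW
  simpa using this

/-- Decoding map `Fin 3 → {-1, 0, 1}`. -/
def dec3 : Fin 3 → ℝ := fun k => (k : ℕ) - 1

/-- The elementary null pieces covering the restricted transition space. -/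
def pieceSet {N Q P : ℕ} (Φ : Matrix (Fin Q) (Fin N) ℝ) (D : Matrix (Fin N) (Fin P) ℝ)
    (AJ : Set (Fin P) → Matrix (Fin N) (Fin N) ℝ) (lam : ℝ)
    (J K : Set (Fin P)) (a b : Fin P → Fin 3) : Set (Fin Q → ℝ) :=
  {y | ¬ (Set.range (Φᵀ * (Φ * AJ J * Φᵀ - 1)).mulVec ⊆ colSpan D (J \ K)) ∧
    projG (GJ D (J \ K)) ((Φᵀ * (Φ * AJ J * Φᵀ - 1)).mulVec y)
      = projG (GJ D (J \ K))
          (lam • ((Φᵀ * Φ * AJ J - 1).mulVec (D.mulVec (dec3 ∘ a)) - D.mulVec (dec3 ∘ b)))}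

lemma pieceSet_null {N Q P : ℕ} (Φ : Matrix (Fin Q) (Fin N) ℝ) (D : Matrix (Fin N) (Fin P) ℝ)
    (AJ : Set (Fin P) → Matrix (Fin N) (Fin N) ℝ) (lam : ℝ)
    (J K : Set (Fin P)) (a b : Fin P → Fin 3) :
    MeasureTheory.volume (pieceSet Φ D AJ lam J K a b) = 0 := by
  classical
  by_cases hr : Set.range (Φᵀ * (Φ * AJ J * Φᵀ - 1)).mulVec ⊆ colSpan D (J \ K)
  · have : pieceSet Φ D AJ lam J K a b = ∅ := by
      ext y; simp only [pieceSet, Set.mem_setOf_eq, Set.mem_empty_iff_false, iff_false]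
      tauto
    rw [this]; exact MeasureTheory.measure_empty
  · obtain ⟨w, hwr, hwn⟩ := Set.not_subset.mp hr
    obtain ⟨y₀, rfl⟩ := hwr
    have h0 : projG (GJ D (J \ K)) ((Φᵀ * (Φ * AJ J * Φᵀ - 1)).mulVec y₀) ≠ 0 :=
      fun h => hwn (mem_colSpan_of_projG_zero D _ _ h)
    obtain ⟨i, hi⟩ : ∃ i, projG (GJ D (J \ K)) ((Φᵀ * (Φ * AJ J * Φᵀ - 1)).mulVec y₀) i ≠ 0 := by
      by_contra hcon
      push_neg at hcon
      exact h0 (funext hcon)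
    set f : (Fin Q → ℝ) →ₗ[ℝ] ℝ :=
      (LinearMap.proj i) ∘ₗ projGLin (GJ D (J \ K)) ∘ₗ (Φᵀ * (Φ * AJ J * Φᵀ - 1)).mulVecLin
      with hfdef
    have hfy : ∀ y, f y = projG (GJ D (J \ K)) ((Φᵀ * (Φ * AJ J * Φᵀ - 1)).mulVec y) i := by
      intro y
      simp only [hfdef, LinearMap.coe_comp, Function.comp_apply, Matrix.mulVecLin_apply,
        projGLin_apply, LinearMap.proj_apply]
    have hfne : f ≠ 0 := by
      intro h
      apply hi
      rw [← hfy y₀, h]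
      rfl
    refine MeasureTheory.measure_mono_null (fun y hy => ?_)
      (levelset_null f hfne (projG (GJ D (J \ K))
        (lam • ((Φᵀ * Φ * AJ J - 1).mulVec (D.mulVec (dec3 ∘ a)) - D.mulVec (dec3 ∘ b))) i))
    show f y = _
    rw [hfy]
    exact congrFun hy.2 i

/-- For every fixed `λ > 0`, the `λ`-restricted transition space
`H_{·,λ} = {y : (y, λ) ∈ H}` has Lebesgue measure zero in `ℝ^Q`. -/
theorem restricted_transition_space_measure_zero
    {N Q P : ℕ} (hN : 0 < N) (hQ : 0 < Q) (hP : 0 < P)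
    (Φ : Matrix (Fin Q) (Fin N) ℝ) (D : Matrix (Fin N) (Fin P) ℝ)
    (hH0 : ∀ x : Fin N → ℝ, Φ.mulVec x = 0 → Dᵀ.mulVec x = 0 → x = 0)
    (AJ : Set (Fin P) → Matrix (Fin N) (Fin N) ℝ) (hAJ : IsAJChoice Φ D AJ)
    (lam : ℝ) (hlam : 0 < lam) :
    MeasureTheory.volume {y : Fin Q → ℝ | (y, lam) ∈ transitionSpace Φ D AJ} = 0 := by
  classical
  have hsub : {y : Fin Q → ℝ | (y, lam) ∈ transitionSpace Φ D AJ} ⊆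
      ⋃ (J : Set (Fin P)) (K : Set (Fin P)) (a : Fin P → Fin 3) (b : Fin P → Fin 3),
        pieceSet Φ D AJ lam J K a b := by
    intro y hy
    obtain ⟨-, J, K, s, σ, hJ, hKJ, hr, hs1, hs0, hσ1, hσ0, heq⟩ := hy
    set a : Fin P → Fin 3 := fun j => if s j = 1 then 2 else if s j = -1 then 0 else 1 with ha
    set b : Fin P → Fin 3 := fun j => if σ j = 1 then 2 else if σ j = -1 then 0 else 1 with hb
    have hsa : dec3 ∘ a = s := by
      funext j
      by_cases hjJ : j ∈ J
      · have h0 : s j = 0 := hs0 j hjJ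
        simp only [Function.comp_apply, ha, h0]
        norm_num [dec3]
      · rcases hs1 j hjJ with h1 | h1 <;>
          simp only [Function.comp_apply, ha, h1] <;> norm_num [dec3]
    have hsb : dec3 ∘ b = σ := by
      funext j
      by_cases hjK : j ∈ K
      · rcases hσ1 j hjK with h1 | h1 <;>
          simp only [Function.comp_apply, hb, h1] <;> norm_num [dec3]
      · have h0 : σ j = 0 := hσ0 j hjK
        simp only [Function.comp_apply, hb, h0]
        norm_num [dec3]
    refine Set.mem_iUnion.mpr ⟨J, Set.mem_iUnion.mpr ⟨K, Set.mem_iUnion.mpr ⟨a,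
      Set.mem_iUnion.mpr ⟨b, ?_⟩⟩⟩⟩
    refine ⟨hr, ?_⟩
    rw [hsa, hsb]
    exact heq
  refine MeasureTheory.measure_mono_null hsub ?_
  refine MeasureTheory.measure_iUnion_null fun J => MeasureTheory.measure_iUnion_null fun K =>
    MeasureTheory.measure_iUnion_null fun a => MeasureTheory.measure_iUnion_null fun b =>
    pieceSet_null Φ D AJ lam J K a b
end

section
/- Let x⋆ be a solution of (P_λ(y)) with D-cosupport J, and suppose (H_J) fails, i.e. Ker Φ ∩ G_J ≠ {0}. Then there exists a solution x⋆⋆ of (P_λ(y)) whose D-support is strictly contained in the D-support of x⋆, i.e. supp(D* x⋆⋆) ⊊ supp(D* x⋆). -/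
open Matrix MeasureTheory ProbabilityTheory

/-- `|a + c| + |a - c| = 2|a|` when `|c| ≤ |a|`. -/
lemma abs_add_abs_sub_of_abs_le (a c : ℝ) (h : |c| ≤ |a|) :
    |a + c| + |a - c| = 2 * |a| := by
  rcases le_total 0 a with ha | ha
  · rw [abs_of_nonneg ha] at h
    have h' := abs_le.mp h
    rw [abs_of_nonneg ha, abs_of_nonneg (by linarith [h'.1]),
      abs_of_nonneg (by linarith [h'.2])]
    ring
  · rw [abs_of_nonpos ha] at h
    have h' := abs_le.mp h
    rw [abs_of_nonpos ha, abs_of_nonpos (by linarith [h'.2]),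
      abs_of_nonpos (by linarith [h'.1])]
    ring

/-- If `x⋆` is a solution of `(P_λ(y))` whose cosupport `J` fails `(H_J)`, then there is
another solution whose `D`-support is strictly contained in that of `x⋆`. -/
theorem lasso_support_reduction
    {N Q P : ℕ} (hN : 0 < N) (hQ : 0 < Q) (hP : 0 < P)
    (Φ : Matrix (Fin Q) (Fin N) ℝ) (D : Matrix (Fin N) (Fin P) ℝ)
    (hH0 : ∀ x : Fin N → ℝ, Φ.mulVec x = 0 → Dᵀ.mulVec x = 0 → x = 0)
    (y : Fin Q → ℝ) (lam : ℝ) (hlam : 0 < lam)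
    (xs : Fin N → ℝ) (hxs : IsLassoSol Φ D y lam xs)
    (J : Set (Fin P)) (hJ : J = {j | Dᵀ.mulVec xs j = 0})
    (hnHJ : ¬ HJcond Φ D J) :
    ∃ xss : Fin N → ℝ, IsLassoSol Φ D y lam xss ∧
      {i | Dᵀ.mulVec xss i ≠ 0} ⊂ {i | Dᵀ.mulVec xs i ≠ 0} := by
  classical
  rw [HJcond] at hnHJ
  push_neg at hnHJ
  obtain ⟨h, hΦh, hGJ, hne⟩ := hnHJ
  set a : Fin P → ℝ := fun j => Dᵀ.mulVec xs j with ha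
  set b : Fin P → ℝ := fun j => Dᵀ.mulVec h j with hb
  have hbJ : ∀ j, a j = 0 → b j = 0 := by
    intro j hja
    exact hGJ j (by rw [hJ]; exact hja)
  have hbne : ∃ j, b j ≠ 0 := by
    by_contra hc
    push_neg at hc
    exact hne (hH0 h hΦh (funext hc))
  obtain ⟨j₀, hj₀mem, hj₀min⟩ := Finset.exists_min_image
    (Finset.univ.filter fun j => b j ≠ 0) (fun j => |a j| / |b j|)
    ⟨hbne.choose, by simp [hbne.choose_spec]⟩
  have hbj₀ : b j₀ ≠ 0 := by simpa using hj₀mem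
  have haj₀ : a j₀ ≠ 0 := fun h0 => hbj₀ (hbJ j₀ h0)
  set t : ℝ := -(a j₀ / b j₀) with ht
  have habs_t : |t| = |a j₀| / |b j₀| := by
    rw [ht, abs_neg, abs_div]
  have hbound : ∀ j, |t * b j| ≤ |a j| := by
    intro j
    by_cases hbz : b j = 0
    · simp [hbz]
    · have hmin := hj₀min j (by simp [hbz])
      have hbpos : 0 < |b j| := abs_pos.mpr hbz
      rw [abs_mul, habs_t]
      calc |a j₀| / |b j₀| * |b j| ≤ |a j| / |b j| * |b j| := by
            apply mul_le_mul_of_nonneg_right hmin (abs_nonneg _)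
        _ = |a j| := by field_simp
  -- objective along the line xs + s • h
  have hΦline : ∀ s : ℝ, Φ.mulVec (xs + s • h) = Φ.mulVec xs := by
    intro s
    rw [Matrix.mulVec_add, Matrix.mulVec_smul, hΦh]
    simp
  have hDline : ∀ (s : ℝ) (j : Fin P), Dᵀ.mulVec (xs + s • h) j = a j + s * b j := by
    intro s j
    rw [Matrix.mulVec_add, Matrix.mulVec_smul]
    simp [ha, hb]
  have hL : ∀ s : ℝ, lassoObj Φ D y lam (xs + s • h) =
      (1 / 2) * ∑ i, (y i - Φ.mulVec xs i) ^ 2 + lam * ∑ j, |a j + s * b j| := by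
    intro s
    rw [lassoObj, hΦline s]
    congr 1
    congr 1
    exact Finset.sum_congr rfl fun j _ => by rw [hDline s j]
  have hLxs : lassoObj Φ D y lam xs =
      (1 / 2) * ∑ i, (y i - Φ.mulVec xs i) ^ 2 + lam * ∑ j, |a j| := rfl
  -- minimality of xs gives inequalities on the ℓ¹ sums
  have hineq : ∀ s : ℝ, (∑ j, |a j|) ≤ ∑ j, |a j + s * b j| := by
    intro s
    have := hxs (xs + s • h)
    rw [hL s, hLxs] at this
    have hlam' : lam * ∑ j, |a j| ≤ lam * ∑ j, |a j + s * b j| := by linarith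
    exact le_of_mul_le_mul_left hlam' hlam
  have hsum2 : (∑ j, |a j + t * b j|) + (∑ j, |a j + (-t) * b j|) = 2 * ∑ j, |a j| := by
    rw [← Finset.sum_add_distrib, Finset.mul_sum]
    refine Finset.sum_congr rfl fun j _ => ?_
    have h2 : a j + -t * b j = a j - t * b j := by ring
    rw [h2]
    exact abs_add_abs_sub_of_abs_le (a j) (t * b j) (hbound j)
  have hEq : (∑ j, |a j + t * b j|) = ∑ j, |a j| := by
    have h1 := hineq t
    have h2 := hineq (-t)
    linarith
  refine ⟨xs + t • h, ?_, ?_⟩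
  · intro x'
    rw [hL t, hEq, ← hLxs]
    exact hxs x'
  · rw [Set.ssubset_def]
    constructor
    · intro j hj
      simp only [Set.mem_setOf_eq] at hj ⊢
      rw [hDline t j] at hj
      intro hja
      have : a j = 0 := hja
      exact hj (by rw [this, hbJ j this]; ring)
    · intro hsub
      have hj₀ : j₀ ∈ {i | Dᵀ.mulVec xs i ≠ 0} := haj₀
      have := hsub hj₀
      simp only [Set.mem_setOf_eq] at this
      rw [hDline t j₀] at this
      apply this
      rw [ht]
      field_simp
      ring
end

section
/- For every y ∈ ℝ^Q and λ > 0, there exists a solution x⋆ of (P_λ(y)) whose D-cosupport J satisfies (H_J): Ker Φ ∩ G_J = {0}. -/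
open Matrix MeasureTheory ProbabilityTheory

/- ======================  auxiliary lemmas  ====================== -/

private lemma abs_affine_eq (a b t : ℝ) (h0 : a = 0 → b = 0)
    (h : 0 ≤ a * (a + t * b)) : |a + t * b| = |a| + t * (b * Real.sign a) := by
  rcases lt_trichotomy a 0 with ha | ha | ha
  · have hb : a + t * b ≤ 0 := by nlinarith
    rw [abs_of_nonpos hb, abs_of_neg ha, Real.sign_of_neg ha]; ring
  · simp [ha, h0 ha]
  · have hb : 0 ≤ a + t * b := by nlinarith
    rw [abs_of_nonneg hb, abs_of_pos ha, Real.sign_of_pos ha]; ring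

/-- Existence of a lasso minimizer, by coercivity and compactness. -/
private lemma lasso_exists_min {N Q P : ℕ} (Φ : Matrix (Fin Q) (Fin N) ℝ)
    (D : Matrix (Fin N) (Fin P) ℝ)
    (hH0 : ∀ x : Fin N → ℝ, Φ.mulVec x = 0 → Dᵀ.mulVec x = 0 → x = 0)
    (y : Fin Q → ℝ) (lam : ℝ) (hlam : 0 < lam) :
    ∃ x, IsLassoSol Φ D y lam x := by
  set L := lassoObj Φ D y lam with hLdef
  have hΦc : Continuous fun x : Fin N → ℝ => Φ.mulVec x := by
    have h := Φ.mulVecLin.continuous_of_finiteDimensional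
    have he : (⇑Φ.mulVecLin) = fun x : Fin N → ℝ => Φ.mulVec x :=
      funext fun v => Matrix.mulVecLin_apply Φ v
    rwa [he] at h
  have hDc : Continuous fun x : Fin N → ℝ => Dᵀ.mulVec x := by
    have h := Dᵀ.mulVecLin.continuous_of_finiteDimensional
    have he : (⇑Dᵀ.mulVecLin) = fun x : Fin N → ℝ => Dᵀ.mulVec x :=
      funext fun v => Matrix.mulVecLin_apply Dᵀ v
    rwa [he] at h
  have hLc : Continuous L := by
    rw [hLdef]
    unfold lassoObj
    refine Continuous.add ?_ ?_
    · exact continuous_const.mul (continuous_finset_sum _ fun i _ =>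
        ((continuous_const.sub ((continuous_apply i).comp hΦc)).pow 2))
    · exact continuous_const.mul (continuous_finset_sum _ fun j _ =>
        ((continuous_apply j).comp hDc).abs)
  have hquad : ∀ x : Fin N → ℝ, 0 ≤ ∑ i, (y i - Φ.mulVec x i) ^ 2 :=
    fun x => Finset.sum_nonneg fun i _ => sq_nonneg _
  have habs : ∀ x : Fin N → ℝ, 0 ≤ ∑ j, |Dᵀ.mulVec x j| :=
    fun x => Finset.sum_nonneg fun j _ => abs_nonneg _
  have hL0 : 0 ≤ L 0 := by
    rw [hLdef]; unfold lassoObj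
    have := hquad 0; have := habs 0; nlinarith
  -- the injective linear map x ↦ (Φx, D*x)
  set f : (Fin N → ℝ) →ₗ[ℝ] (Fin Q → ℝ) × (Fin P → ℝ) :=
    Φ.mulVecLin.prod Dᵀ.mulVecLin with hfdef
  have hinj : Function.Injective f := by
    intro u v huv
    have h1 : Φ.mulVec u = Φ.mulVec v := congrArg Prod.fst huv
    have h2 : Dᵀ.mulVec u = Dᵀ.mulVec v := congrArg Prod.snd huv
    have hΦ : Φ.mulVec (u - v) = 0 := by
      rw [Matrix.mulVec_sub, h1, sub_self]
    have hD : Dᵀ.mulVec (u - v) = 0 := by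
      rw [Matrix.mulVec_sub, h2, sub_self]
    have := hH0 _ hΦ hD
    exact sub_eq_zero.1 this
  obtain ⟨C, hC0, hCx⟩ : ∃ C : ℝ, 0 ≤ C ∧ ∀ x : Fin N → ℝ, ‖x‖ ≤ C * ‖f x‖ := by
    set e := LinearEquiv.ofInjective f hinj with hedef
    set g := LinearMap.toContinuousLinearMap (e.symm.toLinearMap) with hgdef
    refine ⟨‖g‖, norm_nonneg g, fun x => ?_⟩
    have hz : (⟨f x, LinearMap.mem_range_self f x⟩ : LinearMap.range f) = e x :=
      Subtype.ext (LinearEquiv.ofInjective_apply f x).symm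
    have hgx : g ⟨f x, LinearMap.mem_range_self f x⟩ = x := by
      rw [hgdef]
      simp only [LinearMap.coe_toContinuousLinearMap', LinearEquiv.coe_coe]
      rw [hz]
      exact e.symm_apply_apply x
    calc ‖x‖ = ‖g ⟨f x, LinearMap.mem_range_self f x⟩‖ := by rw [hgx]
      _ ≤ ‖g‖ * ‖(⟨f x, LinearMap.mem_range_self f x⟩ : LinearMap.range f)‖ :=
          g.le_opNorm _
      _ = ‖g‖ * ‖f x‖ := rfl
  set M : ℝ := max (‖y‖ + Real.sqrt (2 * L 0)) (L 0 / lam) with hMdef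
  set R : ℝ := C * M with hRdef
  set S : Set (Fin N → ℝ) := {x | L x ≤ L 0} with hSdef
  have h0S : (0 : Fin N → ℝ) ∈ S := by
    rw [hSdef]
    simp only [Set.mem_setOf_eq]
    exact le_rfl
  have hfb : ∀ x ∈ S, ‖f x‖ ≤ M := by
    intro x hx
    have hxL : L x ≤ L 0 := hx
    have hLx : L x = (1 / 2) * (∑ i, (y i - Φ.mulVec x i) ^ 2)
        + lam * ∑ j, |Dᵀ.mulVec x j| := rfl
    have hq : ∑ i, (y i - Φ.mulVec x i) ^ 2 ≤ 2 * L 0 := by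
      have h1 : lam * ∑ j, |Dᵀ.mulVec x j| ≥ 0 := mul_nonneg hlam.le (habs x)
      nlinarith [hquad x]
    have ha : ∑ j, |Dᵀ.mulVec x j| ≤ L 0 / lam := by
      have h1 : lam * ∑ j, |Dᵀ.mulVec x j| ≤ L 0 := by nlinarith [hquad x]
      rw [le_div_iff₀ hlam]; linarith [h1]
    have hf1 : ‖Φ.mulVec x‖ ≤ ‖y‖ + Real.sqrt (2 * L 0) := by
      rw [pi_norm_le_iff_of_nonneg (by positivity)]
      intro i
      have hsq : (y i - Φ.mulVec x i) ^ 2 ≤ 2 * L 0 :=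
        le_trans (Finset.single_le_sum (f := fun k => (y k - Φ.mulVec x k) ^ 2)
          (fun k _ => sq_nonneg _) (Finset.mem_univ i)) hq
      have habs2 : |y i - Φ.mulVec x i| ≤ Real.sqrt (2 * L 0) := by
        rw [← Real.sqrt_sq_eq_abs]
        exact Real.sqrt_le_sqrt hsq
      have hyi : |y i| ≤ ‖y‖ := by
        have := norm_le_pi_norm y i
        simpa [Real.norm_eq_abs] using this
      have : |Φ.mulVec x i| ≤ |y i| + |y i - Φ.mulVec x i| := by
        have h := abs_sub (y i) (y i - Φ.mulVec x i)
        have he : y i - (y i - Φ.mulVec x i) = Φ.mulVec x i := by ring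
        calc |Φ.mulVec x i| = |y i - (y i - Φ.mulVec x i)| := by rw [he]
          _ ≤ |y i| + |y i - Φ.mulVec x i| := abs_sub _ _
      have hnorm : ‖Φ.mulVec x i‖ = |Φ.mulVec x i| := Real.norm_eq_abs _
      rw [hnorm]
      linarith
    have hf2 : ‖Dᵀ.mulVec x‖ ≤ L 0 / lam := by
      rw [pi_norm_le_iff_of_nonneg (by positivity)]
      intro j
      have := le_trans
        (Finset.single_le_sum (fun k _ => abs_nonneg (Dᵀ.mulVec x k)) (Finset.mem_univ j)) ha
      simpa [Real.norm_eq_abs] using this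
    have hfx : f x = (Φ.mulVec x, Dᵀ.mulVec x) := rfl
    rw [hfx, Prod.norm_def]
    exact max_le (le_trans hf1 (le_max_left _ _)) (le_trans hf2 (le_max_right _ _))
  have hSsub : S ⊆ Metric.closedBall 0 R := by
    intro x hx
    rw [Metric.mem_closedBall, dist_zero_right]
    calc ‖x‖ ≤ C * ‖f x‖ := hCx x
      _ ≤ C * M := mul_le_mul_of_nonneg_left (hfb x hx) hC0
  have hSclosed : IsClosed S := by
    have : S = L ⁻¹' Set.Iic (L 0) := rfl
    rw [this]
    exact IsClosed.preimage hLc isClosed_Iic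
  have hScompact : IsCompact S :=
    Metric.isCompact_of_isClosed_isBounded hSclosed
      (Metric.isBounded_closedBall.subset hSsub)
  obtain ⟨x, hxS, hxmin⟩ := hScompact.exists_isMinOn ⟨0, h0S⟩ hLc.continuousOn
  refine ⟨x, fun z => ?_⟩
  by_cases hz : z ∈ S
  · exact hxmin hz
  · have h1 : L x ≤ L 0 := hxmin h0S
    have h2 : L 0 < L z := lt_of_not_ge hz
    exact le_of_lt (lt_of_le_of_lt h1 h2)

/-- Descent step: if at a minimizer `xs` there is a nonzero direction `v` in
`Ker Φ ∩ G_J` with a positive crossing time, then there is a minimizer with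
strictly smaller D-support. -/
private lemma lasso_descent {N Q P : ℕ} {Φ : Matrix (Fin Q) (Fin N) ℝ}
    {D : Matrix (Fin N) (Fin P) ℝ} {y : Fin Q → ℝ} {lam : ℝ} (hlam : 0 < lam)
    {xs v : Fin N → ℝ} (hsol : IsLassoSol Φ D y lam xs)
    (hker : Φ.mulVec v = 0)
    (hcos : ∀ j, Dᵀ.mulVec xs j = 0 → Dᵀ.mulVec v j = 0)
    {j₁ : Fin P} (hbj₁ : Dᵀ.mulVec v j₁ ≠ 0)
    (hpos : 0 < -(Dᵀ.mulVec xs j₁) / (Dᵀ.mulVec v j₁)) :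
    ∃ x' : Fin N → ℝ, IsLassoSol Φ D y lam x' ∧
      (Finset.univ.filter fun j => Dᵀ.mulVec x' j ≠ 0).card <
      (Finset.univ.filter fun j => Dᵀ.mulVec xs j ≠ 0).card := by
  set a : Fin P → ℝ := fun j => Dᵀ.mulVec xs j with hadef
  set b : Fin P → ℝ := fun j => Dᵀ.mulVec v j with hbdef
  set t : Fin P → ℝ := fun j => -(a j) / (b j) with htdef
  set s : ℝ := ∑ j, b j * Real.sign (a j) with hsdef
  have hab : ∀ j, b j ≠ 0 → a j = -(t j) * b j := by
    intro j hbj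
    rw [htdef]
    field_simp
  have htne : ∀ j, b j ≠ 0 → t j ≠ 0 := by
    intro j hbj
    have haj : a j ≠ 0 := fun h => hbj (hcos j h)
    exact div_ne_zero (neg_ne_zero.2 haj) hbj
  -- translation formulas
  have hΦu : ∀ u : ℝ, Φ.mulVec (xs + u • v) = Φ.mulVec xs := by
    intro u
    rw [Matrix.mulVec_add, Matrix.mulVec_smul, hker, smul_zero, add_zero]
  have hDu : ∀ (u : ℝ) (j : Fin P), Dᵀ.mulVec (xs + u • v) j = a j + u * b j := by
    intro u j
    rw [Matrix.mulVec_add, Matrix.mulVec_smul]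
    simp [hadef, hbdef, smul_eq_mul]
  -- key affine identity for the ℓ¹ term
  have hsum : ∀ u : ℝ, (∀ j, b j ≠ 0 → 0 ≤ t j * (t j - u)) →
      (∑ j, |a j + u * b j|) = (∑ j, |a j|) + u * s := by
    intro u hu
    have hterm : ∀ j : Fin P, |a j + u * b j| = |a j| + u * (b j * Real.sign (a j)) := by
      intro j
      by_cases hbj : b j = 0
      · simp [hbj]
      · refine abs_affine_eq (a j) (b j) u (hcos j) ?_
        have h1 := hu j hbj
        have h2 := hab j hbj
        rw [h2]
        have : -(t j) * b j * (-(t j) * b j + u * b j) = (t j * (t j - u)) * (b j) ^ 2 := by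
          ring
        rw [this]
        positivity
      
    calc (∑ j, |a j + u * b j|) = ∑ j, (|a j| + u * (b j * Real.sign (a j))) :=
          Finset.sum_congr rfl fun j _ => hterm j
      _ = (∑ j, |a j|) + ∑ j, u * (b j * Real.sign (a j)) := Finset.sum_add_distrib
      _ = (∑ j, |a j|) + u * s := by rw [hsdef, Finset.mul_sum]
  -- objective along the line
  have hobj : ∀ u : ℝ, (∀ j, b j ≠ 0 → 0 ≤ t j * (t j - u)) →
      lassoObj Φ D y lam (xs + u • v) = lassoObj Φ D y lam xs + lam * (u * s) := by
    intro u hu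
    unfold lassoObj
    rw [hΦu u]
    have : (∑ j, |Dᵀ.mulVec (xs + u • v) j|) = ∑ j, |a j + u * b j| :=
      Finset.sum_congr rfl fun j _ => by rw [hDu u j]
    rw [this, hsum u hu]
    have ha : (∑ j, |Dᵀ.mulVec xs j|) = ∑ j, |a j| := rfl
    rw [ha]; ring
  -- minimal modulus crossing time
  have hj₁K : j₁ ∈ Finset.univ.filter fun j => b j ≠ 0 := by
    simp [hbdef, hbj₁]
  obtain ⟨jε, hjεK, hjεmin⟩ :=
    Finset.exists_min_image (Finset.univ.filter fun j => b j ≠ 0)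
      (fun j => |t j|) ⟨j₁, hj₁K⟩
  have hjεb : b jε ≠ 0 := (Finset.mem_filter.1 hjεK).2
  set ε : ℝ := |t jε| with hεdef
  have hε : 0 < ε := abs_pos.2 (htne jε hjεb)
  have hcondε : ∀ u : ℝ, |u| ≤ ε → ∀ j, b j ≠ 0 → 0 ≤ t j * (t j - u) := by
    intro u hu j hbj
    have h1 : ε ≤ |t j| := hjεmin j (by simp [hbj])
    have h2 : t j * u ≤ |t j| * |u| := le_trans (le_abs_self _) (abs_mul _ _).le
    have h3 : |t j| * |u| ≤ |t j| * ε := mul_le_mul_of_nonneg_left hu (abs_nonneg _)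
    have h4 : |t j| * ε ≤ |t j| * |t j| := mul_le_mul_of_nonneg_left h1 (abs_nonneg _)
    have h5 : |t j| * |t j| = t j * t j := abs_mul_abs_self _
    nlinarith
  -- slope is zero
  have hs0 : s = 0 := by
    have h1 : 0 ≤ ε * s := by
      have hc := hcondε ε (by rw [abs_of_pos hε]) 
      have := hsol (xs + ε • v)
      rw [hobj ε hc] at this
      nlinarith
    have h2 : 0 ≤ -ε * s := by
      have hc := hcondε (-ε) (by rw [abs_neg, abs_of_pos hε])
      have := hsol (xs + (-ε) • v)
      rw [hobj (-ε) hc] at this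
      nlinarith
    nlinarith
  -- minimal positive crossing time
  have hj₁pos : j₁ ∈ (Finset.univ.filter fun j => b j ≠ 0).filter fun j => 0 < t j := by
    refine Finset.mem_filter.2 ⟨hj₁K, ?_⟩
    simpa [htdef, hadef, hbdef] using hpos
  obtain ⟨j₀, hj₀mem, hj₀min⟩ :=
    Finset.exists_min_image
      ((Finset.univ.filter fun j => b j ≠ 0).filter fun j => 0 < t j) t ⟨j₁, hj₁pos⟩
  have hj₀b : b j₀ ≠ 0 := (Finset.mem_filter.1 (Finset.mem_filter.1 hj₀mem).1).2
  have hj₀t : 0 < t j₀ := (Finset.mem_filter.1 hj₀mem).2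
  set T : ℝ := t j₀ with hTdef
  have hcondT : ∀ j, b j ≠ 0 → 0 ≤ t j * (t j - T) := by
    intro j hbj
    rcases lt_trichotomy (t j) 0 with h | h | h
    · have : t j - T < 0 := by linarith
      exact le_of_lt (mul_pos_of_neg_of_neg h this)
    · exact absurd h (htne j hbj)
    · have hjmem : j ∈ (Finset.univ.filter fun k => b k ≠ 0).filter fun k => 0 < t k := by
        refine Finset.mem_filter.2 ⟨by simp [hbj], h⟩
      have : T ≤ t j := hj₀min j hjmem
      exact mul_nonneg h.le (by linarith)
  set x' : Fin N → ℝ := xs + T • v with hx'def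
  have hLx' : lassoObj Φ D y lam x' = lassoObj Φ D y lam xs := by
    rw [hx'def, hobj T hcondT, hs0]; ring
  have hsol' : IsLassoSol Φ D y lam x' := by
    intro z; rw [hLx']; exact hsol z
  refine ⟨x', hsol', ?_⟩
  have hsub : (Finset.univ.filter fun j => Dᵀ.mulVec x' j ≠ 0) ⊆
      Finset.univ.filter fun j => Dᵀ.mulVec xs j ≠ 0 := by
    intro j hj
    have hj' : Dᵀ.mulVec x' j ≠ 0 := (Finset.mem_filter.1 hj).2
    refine Finset.mem_filter.2 ⟨Finset.mem_univ _, ?_⟩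
    intro haj
    apply hj'
    rw [hx'def, hDu T j]
    have hbj : b j = 0 := hcos j haj
    have haj' : a j = 0 := haj
    rw [haj', hbj]; ring
  have hj₀in : j₀ ∈ Finset.univ.filter fun j => Dᵀ.mulVec xs j ≠ 0 := by
    refine Finset.mem_filter.2 ⟨Finset.mem_univ _, ?_⟩
    exact fun h => hj₀b (hcos j₀ h)
  have hj₀out : j₀ ∉ Finset.univ.filter fun j => Dᵀ.mulVec x' j ≠ 0 := by
    intro hmem
    have hj' : Dᵀ.mulVec x' j₀ ≠ 0 := (Finset.mem_filter.1 hmem).2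
    apply hj'
    rw [hx'def, hDu T j₀, hab j₀ hj₀b, hTdef]
    ring
  exact Finset.card_lt_card ⟨hsub, fun hsup => hj₀out (hsup hj₀in)⟩

/-- There always exists a solution of `(P_λ(y))` whose `D`-cosupport `J` satisfies
`(H_J)`: `Ker Φ ∩ G_J = {0}`. -/
theorem lasso_exists_sol_HJ
    {N Q P : ℕ} (hN : 0 < N) (hQ : 0 < Q) (hP : 0 < P)
    (Φ : Matrix (Fin Q) (Fin N) ℝ) (D : Matrix (Fin N) (Fin P) ℝ)
    (hH0 : ∀ x : Fin N → ℝ, Φ.mulVec x = 0 → Dᵀ.mulVec x = 0 → x = 0)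
    (y : Fin Q → ℝ) (lam : ℝ) (hlam : 0 < lam) :
    ∃ xs : Fin N → ℝ, IsLassoSol Φ D y lam xs ∧
      HJcond Φ D {j | Dᵀ.mulVec xs j = 0} := by
  obtain ⟨x₀, hx₀⟩ := lasso_exists_min Φ D hH0 y lam hlam
  set Scard : Set ℕ := {n | ∃ x : Fin N → ℝ, IsLassoSol Φ D y lam x ∧
      (Finset.univ.filter fun j => Dᵀ.mulVec x j ≠ 0).card = n} with hScard
  have hSne : Scard.Nonempty := ⟨_, x₀, hx₀, rfl⟩
  obtain ⟨xs, hxs, hcard⟩ := Nat.sInf_mem hSne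
  refine ⟨xs, hxs, ?_⟩
  intro h hker hG
  by_contra hhne
  have hcos : ∀ j, Dᵀ.mulVec xs j = 0 → Dᵀ.mulVec h j = 0 := fun j hj => hG j hj
  -- h has a nonzero image under Dᵀ
  have hbex : ∃ j₁ : Fin P, Dᵀ.mulVec h j₁ ≠ 0 := by
    by_contra hall
    push_neg at hall
    exact hhne (hH0 h hker (funext hall))
  obtain ⟨j₁, hbj₁⟩ := hbex
  have haj₁ : Dᵀ.mulVec xs j₁ ≠ 0 := fun ha => hbj₁ (hcos j₁ ha)
  have htne : -(Dᵀ.mulVec xs j₁) / (Dᵀ.mulVec h j₁) ≠ 0 :=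
    div_ne_zero (neg_ne_zero.2 haj₁) hbj₁
  have hdescent : ∃ x' : Fin N → ℝ, IsLassoSol Φ D y lam x' ∧
      (Finset.univ.filter fun j => Dᵀ.mulVec x' j ≠ 0).card <
      (Finset.univ.filter fun j => Dᵀ.mulVec xs j ≠ 0).card := by
    rcases htne.lt_or_gt with hneg | hpos
    · -- use the direction -h
      have hker' : Φ.mulVec (-h) = 0 := by rw [Matrix.mulVec_neg, hker, neg_zero]
      have hcos' : ∀ j, Dᵀ.mulVec xs j = 0 → Dᵀ.mulVec (-h) j = 0 := by
        intro j hj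
        rw [Matrix.mulVec_neg]
        simp [hcos j hj]
      have hbj₁' : Dᵀ.mulVec (-h) j₁ ≠ 0 := by
        rw [Matrix.mulVec_neg]
        simpa using hbj₁
      have hpos' : 0 < -(Dᵀ.mulVec xs j₁) / (Dᵀ.mulVec (-h) j₁) := by
        rw [Matrix.mulVec_neg, Pi.neg_apply, div_neg]
        linarith
      exact lasso_descent hlam hxs hker' hcos' hbj₁' hpos'
    · exact lasso_descent hlam hxs hker hcos hbj₁ hpos
  obtain ⟨x', hx'sol, hx'card⟩ := hdescent
  have hle : sInf Scard ≤ (Finset.univ.filter fun j => Dᵀ.mulVec x' j ≠ 0).card :=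
    Nat.sInf_le ⟨x', hx'sol, rfl⟩
  omega
end

section
/- Let x⋆ be a solution of (P_λ(y)) with D-cosupport J, and let z ∈ Ker Φ ∩ G_J with z ≠ 0. Define B = {t ∈ ℝ : sign(D*(x⋆ + t z)) = sign(D* x⋆)}. Then B is a bounded open interval of ℝ containing 0, say B = (t₁, t₀) with −∞ < t₁ < 0 < t₀ < +∞; for every t ∈ B, the vector x⋆ + t z is a solution of (P_λ(y)) with Φ(x⋆ + t z) = Φ x⋆ and ‖D*(x⋆ + t z)‖₁ = ‖D* x⋆‖₁; and x⋆ + t₀ z is also a solution of (P_λ(y)) whose D-support is strictly contained in supp(D* x⋆). -/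
open Matrix MeasureTheory ProbabilityTheory

lemma pos_of_sign_eq_one {u : ℝ} (h : Real.sign u = 1) : 0 < u := by
  rcases lt_trichotomy u 0 with h'|h'|h'
  · rw [Real.sign_of_neg h'] at h; norm_num at h
  · simp [h'] at h
  · exact h'

lemma neg_of_sign_eq_neg_one {u : ℝ} (h : Real.sign u = -1) : u < 0 := by
  rcases lt_trichotomy u 0 with h'|h'|h'
  · exact h'
  · simp [h'] at h
  · rw [Real.sign_of_pos h'] at h; norm_num at h

lemma abs_eq_sign_mul (x : ℝ) : |x| = Real.sign x * x := by
  rcases lt_trichotomy x 0 with h|h|h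
  · rw [Real.sign_of_neg h, abs_of_neg h]; ring
  · simp [h]
  · rw [Real.sign_of_pos h, abs_of_pos h]; ring

lemma abs_helper {a u : ℝ} (h : 0 ≤ a * u) (h0 : a = 0 → u = 0) :
    |u| = Real.sign a * u := by
  rcases eq_or_ne a 0 with ha|ha
  · simp [ha, h0 ha]
  rcases eq_or_ne u 0 with hu|hu
  · simp [hu]
  have hpos : 0 < a * u := h.lt_of_ne (Ne.symm (mul_ne_zero ha hu))
  rcases lt_trichotomy a 0 with hn|h0'|hp
  · have hun : u < 0 := by nlinarith
    rw [Real.sign_of_neg hn, abs_of_neg hun]; ring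
  · exact absurd h0' ha
  · have hup : 0 < u := by nlinarith
    rw [Real.sign_of_pos hp, abs_of_pos hup]; ring

lemma sign_eq_of_mul_pos {a u : ℝ} (h : 0 < a * u) : Real.sign u = Real.sign a := by
  rcases lt_trichotomy a 0 with hn|h0|hp
  · have : u < 0 := by nlinarith
    rw [Real.sign_of_neg hn, Real.sign_of_neg this]
  · rw [h0] at h; simp at h
  · have : 0 < u := by nlinarith
    rw [Real.sign_of_pos hp, Real.sign_of_pos this]

lemma mul_pos_of_sign_eq {a u : ℝ} (h : Real.sign u = Real.sign a) (ha : a ≠ 0) :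
    0 < a * u := by
  rcases lt_trichotomy a 0 with hn|h0|hp
  · rw [Real.sign_of_neg hn] at h
    exact mul_pos_of_neg_of_neg hn (neg_of_sign_eq_neg_one h)
  · exact absurd h0 ha
  · rw [Real.sign_of_pos hp] at h
    exact mul_pos hp (pos_of_sign_eq_one h)

/-- For a solution `x⋆` of `(P_λ(y))` with cosupport `J` and `0 ≠ z ∈ Ker Φ ∩ G_J`, the
set `B = {t : sign(D*(x⋆ + t z)) = sign(D* x⋆)}` is a bounded open interval `(t₁, t₀)`
containing `0`; on `B` all `x⋆ + t z` are solutions with the same `Φ`-image and the same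
`ℓ¹` analysis norm as `x⋆`; and `x⋆ + t₀ z` is a solution whose `D`-support is strictly
contained in `supp(D* x⋆)`. -/
theorem lasso_segment_of_solutions
    {N Q P : ℕ} (hN : 0 < N) (hQ : 0 < Q) (hP : 0 < P)
    (Φ : Matrix (Fin Q) (Fin N) ℝ) (D : Matrix (Fin N) (Fin P) ℝ)
    (hH0 : ∀ x : Fin N → ℝ, Φ.mulVec x = 0 → Dᵀ.mulVec x = 0 → x = 0)
    (y : Fin Q → ℝ) (lam : ℝ) (hlam : 0 < lam)
    (xs : Fin N → ℝ) (hxs : IsLassoSol Φ D y lam xs)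
    (J : Set (Fin P)) (hJ : J = {j | Dᵀ.mulVec xs j = 0})
    (z : Fin N → ℝ) (hz0 : z ≠ 0) (hzker : Φ.mulVec z = 0) (hzG : z ∈ GJ D J) :
    ∃ t₁ t₀ : ℝ, t₁ < 0 ∧ 0 < t₀ ∧
      {t : ℝ | (fun i => Real.sign (Dᵀ.mulVec (xs + t • z) i))
          = fun i => Real.sign (Dᵀ.mulVec xs i)} = Set.Ioo t₁ t₀ ∧
      (∀ t ∈ Set.Ioo t₁ t₀,
        IsLassoSol Φ D y lam (xs + t • z) ∧
        Φ.mulVec (xs + t • z) = Φ.mulVec xs ∧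
        ∑ i, |Dᵀ.mulVec (xs + t • z) i| = ∑ i, |Dᵀ.mulVec xs i|) ∧
      IsLassoSol Φ D y lam (xs + t₀ • z) ∧
      {i | Dᵀ.mulVec (xs + t₀ • z) i ≠ 0} ⊂ {i | Dᵀ.mulVec xs i ≠ 0} := by
  classical
  set a : Fin P → ℝ := Dᵀ.mulVec xs with ha
  set b : Fin P → ℝ := Dᵀ.mulVec z with hb
  have hab : ∀ i, a i = 0 → b i = 0 := by
    intro i hi
    have : i ∈ J := by rw [hJ]; exact hi
    have := hzG i this
    rw [← hb] at this
    exact this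
  have hbne : ∃ i, b i ≠ 0 := by
    by_contra h
    push_neg at h
    apply hz0
    apply hH0 z hzker
    funext i
    rw [← hb]
    exact h i
  obtain ⟨i₀, hi₀⟩ := hbne
  have key : ∀ t : ℝ, Dᵀ.mulVec (xs + t • z) = fun i => a i + t * b i := by
    intro t; funext i
    rw [ha, hb]
    simp [Matrix.mulVec_add, Matrix.mulVec_smul]
  have hΦ : ∀ t : ℝ, Φ.mulVec (xs + t • z) = Φ.mulVec xs := by
    intro t; simp [Matrix.mulVec_add, Matrix.mulVec_smul, hzker]
  have hobj : ∀ t : ℝ, lassoObj Φ D y lam (xs + t • z)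
      = (1/2) * ∑ i, (y i - Φ.mulVec xs i)^2 + lam * ∑ i, |a i + t * b i| := by
    intro t
    simp only [lassoObj, hΦ, key]
  have hxsobj : lassoObj Φ D y lam xs
      = (1/2) * ∑ i, (y i - Φ.mulVec xs i)^2 + lam * ∑ i, |a i| := by
    simp only [lassoObj, ha]
  have hA : ∀ t : ℝ, (∑ i, |a i|) ≤ ∑ i, |a i + t * b i| := by
    intro t
    have h1 := hxs (xs + t • z)
    rw [hobj t, hxsobj] at h1
    have h3 : lam * ∑ i, |a i| ≤ lam * ∑ i, |a i + t * b i| := by linarith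
    exact le_of_mul_le_mul_left h3 hlam
  set K := Finset.univ.filter (fun i => b i ≠ 0) with hK
  have hKmem : ∀ i, i ∈ K ↔ b i ≠ 0 := by intro i; simp [hK]
  have hKa : ∀ i ∈ K, a i ≠ 0 := fun i hi h => (hKmem i).mp hi (hab i h)
  have hK0 : K.Nonempty := ⟨i₀, (hKmem i₀).mpr hi₀⟩
  set c : Fin P → ℝ := fun i => -(a i) / b i with hc
  have hcne : ∀ i ∈ K, c i ≠ 0 := by
    intro i hi
    have hbi := (hKmem i).mp hi
    have hai := hKa i hi
    simp only [hc]
    exact div_ne_zero (neg_ne_zero.mpr hai) hbi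
  have hczero : ∀ i, b i ≠ 0 → a i * a i + c i * (a i * b i) = 0 := by
    intro i hbi
    simp only [hc]
    field_simp
    ring
  have hcharL : ∀ (t : ℝ) (i : Fin P), 0 < a i * b i →
      (Real.sign (a i + t * b i) = Real.sign (a i) ↔ c i < t) := by
    intro t i hpos
    have hbi : b i ≠ 0 := right_ne_zero_of_mul hpos.ne'
    have hai : a i ≠ 0 := left_ne_zero_of_mul hpos.ne'
    constructor
    · intro h
      have h2 : 0 < a i * (a i + t * b i) := mul_pos_of_sign_eq h hai
      have h3 := hczero i hbi
      by_contra hcon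
      push_neg at hcon
      linarith [mul_nonneg (sub_nonneg.mpr hcon) hpos.le, sq_nonneg (a i)]
    · intro h
      have h3 := hczero i hbi
      have h2 : 0 < a i * (a i + t * b i) := by
        nlinarith [mul_pos (sub_pos.mpr h) hpos]
      exact sign_eq_of_mul_pos h2
  have hcharU : ∀ (t : ℝ) (i : Fin P), a i * b i < 0 →
      (Real.sign (a i + t * b i) = Real.sign (a i) ↔ t < c i) := by
    intro t i hneg
    have hbi : b i ≠ 0 := right_ne_zero_of_mul hneg.ne
    have hai : a i ≠ 0 := left_ne_zero_of_mul hneg.ne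
    constructor
    · intro h
      have h2 : 0 < a i * (a i + t * b i) := mul_pos_of_sign_eq h hai
      have h3 := hczero i hbi
      by_contra hcon
      push_neg at hcon
      linarith [mul_nonpos_of_nonneg_of_nonpos (sub_nonneg.mpr hcon) hneg.le, sq_nonneg (a i)]
    · intro h
      have h3 := hczero i hbi
      have h2 : 0 < a i * (a i + t * b i) := by
        nlinarith [mul_neg_of_pos_of_neg (sub_pos.mpr h) hneg]
      exact sign_eq_of_mul_pos h2
  have hLneg : ∀ i, 0 < a i * b i → c i < 0 := by
    intro i h
    have hbi : b i ≠ 0 := right_ne_zero_of_mul h.ne'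
    have hdiv : 0 < a i / b i := by
      rcases mul_pos_iff.mp h with ⟨h1, h2⟩|⟨h1, h2⟩
      · exact div_pos h1 h2
      · exact div_pos_of_neg_of_neg h1 h2
    simp only [hc, neg_div]
    linarith
  have hUpos : ∀ i, a i * b i < 0 → 0 < c i := by
    intro i h
    have hdiv : a i / b i < 0 := by
      rcases mul_neg_iff.mp h with ⟨h1, h2⟩|⟨h1, h2⟩
      · exact div_neg_of_pos_of_neg h1 h2
      · exact div_neg_of_neg_of_pos h1 h2
    simp only [hc, neg_div]
    linarith
  set δ := K.inf' hK0 (fun i => |c i|) with hδdef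
  have hδ : 0 < δ := (Finset.lt_inf'_iff hK0).mpr fun i hi => abs_pos.mpr (hcne i hi)
  have hsmall : ∀ t : ℝ, |t| < δ → ∀ i, Real.sign (a i + t * b i) = Real.sign (a i) := by
    intro t ht i
    by_cases hbi : b i = 0
    · simp [hbi]
    · have hiK : i ∈ K := (hKmem i).mpr hbi
      have hci : δ ≤ |c i| := Finset.inf'_le _ hiK
      have hai : a i ≠ 0 := hKa i hiK
      rcases (mul_ne_zero hai hbi).lt_or_gt with hu|hl
      · refine (hcharU t i hu).mpr ?_
        have h1 : 0 < c i := hUpos i hu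
        have h2 : |c i| = c i := abs_of_pos h1
        have := le_abs_self t
        linarith
      · refine (hcharL t i hl).mpr ?_
        have h1 : c i < 0 := hLneg i hl
        have h2 : |c i| = -c i := abs_of_neg h1
        have := neg_abs_le t
        linarith
  set s := ∑ i, Real.sign (a i) * b i with hs
  have hlin : ∀ t : ℝ, (∀ i, Real.sign (a i + t * b i) = Real.sign (a i)) →
      (∑ i, |a i + t * b i|) = (∑ i, |a i|) + t * s := by
    intro t h
    have heach : ∀ i, |a i + t * b i| = |a i| + t * (Real.sign (a i) * b i) := by
      intro i
      calc |a i + t * b i| = Real.sign (a i + t * b i) * (a i + t * b i) :=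
            abs_eq_sign_mul _
        _ = Real.sign (a i) * (a i + t * b i) := by rw [h i]
        _ = Real.sign (a i) * a i + t * (Real.sign (a i) * b i) := by ring
        _ = |a i| + t * (Real.sign (a i) * b i) := by rw [← abs_eq_sign_mul]
    rw [Finset.sum_congr rfl fun i _ => heach i, Finset.sum_add_distrib,
      ← Finset.mul_sum, hs]
  have hs0 : s = 0 := by
    have hp := hA (δ/2)
    have hq := hA (-(δ/2))
    rw [hlin _ (hsmall _ (by rw [abs_of_pos (by linarith)]; linarith))] at hp
    rw [hlin _ (hsmall _ (by rw [abs_neg, abs_of_pos (by linarith)]; linarith))] at hq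
    nlinarith
  set L := Finset.univ.filter (fun i => 0 < a i * b i) with hLdef
  set U := Finset.univ.filter (fun i => a i * b i < 0) with hUdef
  have hsumb : 0 < ∑ i, |b i| := by
    have h1 := Finset.single_le_sum (f := fun i => |b i|)
      (fun i _ => abs_nonneg _) (Finset.mem_univ i₀)
    have h2 := abs_pos.mpr hi₀
    linarith
  have hUne : U.Nonempty := by
    by_contra h
    rw [Finset.not_nonempty_iff_eq_empty] at h
    have hall : ∀ i, ¬ (a i * b i < 0) := by
      intro i hcon
      have : i ∈ U := by simp [hUdef, hcon]
      rw [h] at this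
      simp at this
    have hterm : ∀ i, Real.sign (a i) * b i = |b i| := by
      intro i
      by_cases hbi : b i = 0
      · simp [hbi]
      · have hai : a i ≠ 0 := fun hh => hbi (hab i hh)
        have hne : a i * b i ≠ 0 := mul_ne_zero hai hbi
        have hposm : 0 < a i * b i := hne.lt_or_gt.resolve_left (hall i)
        rcases mul_pos_iff.mp hposm with ⟨h1, h2⟩|⟨h1, h2⟩
        · rw [Real.sign_of_pos h1, abs_of_pos h2]; ring
        · rw [Real.sign_of_neg h1, abs_of_neg h2]; ring
    have : s = ∑ i, |b i| := by
      rw [hs]; exact Finset.sum_congr rfl fun i _ => hterm i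
    rw [hs0] at this
    linarith
  have hLne : L.Nonempty := by
    by_contra h
    rw [Finset.not_nonempty_iff_eq_empty] at h
    have hall : ∀ i, ¬ (0 < a i * b i) := by
      intro i hcon
      have : i ∈ L := by simp [hLdef, hcon]
      rw [h] at this
      simp at this
    have hterm : ∀ i, Real.sign (a i) * b i = -|b i| := by
      intro i
      by_cases hbi : b i = 0
      · simp [hbi]
      · have hai : a i ≠ 0 := fun hh => hbi (hab i hh)
        have hne : a i * b i ≠ 0 := mul_ne_zero hai hbi
        have hnegm : a i * b i < 0 := hne.lt_or_gt.resolve_right (hall i)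
        rcases mul_neg_iff.mp hnegm with ⟨h1, h2⟩|⟨h1, h2⟩
        · rw [Real.sign_of_pos h1, abs_of_neg h2]; ring
        · rw [Real.sign_of_neg h1, abs_of_pos h2]; ring
    have : s = -∑ i, |b i| := by
      rw [hs, ← Finset.sum_neg_distrib]
      exact Finset.sum_congr rfl fun i _ => by rw [hterm i]
    rw [hs0] at this
    linarith
  set t₁ := L.sup' hLne c with ht₁def
  set t₀ := U.inf' hUne c with ht₀def
  have hLmem : ∀ i, i ∈ L ↔ 0 < a i * b i := by intro i; simp [hLdef]
  have hUmem : ∀ i, i ∈ U ↔ a i * b i < 0 := by intro i; simp [hUdef]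
  have ht₁neg : t₁ < 0 :=
    (Finset.sup'_lt_iff hLne).mpr fun i hi => hLneg i ((hLmem i).mp hi)
  have ht₀pos : 0 < t₀ :=
    (Finset.lt_inf'_iff hUne).mpr fun i hi => hUpos i ((hUmem i).mp hi)
  have hBmem : ∀ t : ℝ,
      (∀ i, Real.sign (a i + t * b i) = Real.sign (a i)) ↔ (t₁ < t ∧ t < t₀) := by
    intro t
    constructor
    · intro h
      constructor
      · exact (Finset.sup'_lt_iff hLne).mpr fun i hi =>
          (hcharL t i ((hLmem i).mp hi)).mp (h i)
      · exact (Finset.lt_inf'_iff hUne).mpr fun i hi =>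
          (hcharU t i ((hUmem i).mp hi)).mp (h i)
    · rintro ⟨h1, h2⟩ i
      by_cases hbi : b i = 0
      · simp [hbi]
      · have hai : a i ≠ 0 := fun hh => hbi (hab i hh)
        rcases (mul_ne_zero hai hbi).lt_or_gt with hu|hl
        · exact (hcharU t i hu).mpr
            (lt_of_lt_of_le h2 (Finset.inf'_le c ((hUmem i).mpr hu)))
        · exact (hcharL t i hl).mpr
            (lt_of_le_of_lt (Finset.le_sup' c ((hLmem i).mpr hl)) h1)
  have habs2 : ∀ t : ℝ, t₁ < t → t ≤ t₀ → ∀ i,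
      |a i + t * b i| = Real.sign (a i) * (a i + t * b i) := by
    intro t h1 h2 i
    refine abs_helper ?_ ?_
    · by_cases hbi : b i = 0
      · simp [hbi]
        nlinarith [mul_self_nonneg (a i)]
      · have hai : a i ≠ 0 := fun hh => hbi (hab i hh)
        have h3 := hczero i hbi
        rcases (mul_ne_zero hai hbi).lt_or_gt with hu|hl
        · have hci : t₀ ≤ c i := Finset.inf'_le c ((hUmem i).mpr hu)
          have htc : t ≤ c i := le_trans h2 hci
          linarith [mul_nonpos_of_nonneg_of_nonpos (sub_nonneg.mpr htc) hu.le]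
        · have hci : c i ≤ t₁ := Finset.le_sup' c ((hLmem i).mpr hl)
          have htc : c i ≤ t := le_trans hci h1.le
          linarith [mul_nonneg (sub_nonneg.mpr htc) hl.le]
    · intro hh
      rw [hh, hab i hh]
      ring
  have hsum : ∀ t : ℝ, t₁ < t → t ≤ t₀ → (∑ i, |a i + t * b i|) = ∑ i, |a i| := by
    intro t h1 h2
    calc (∑ i, |a i + t * b i|)
        = ∑ i, (Real.sign (a i) * a i + t * (Real.sign (a i) * b i)) := by
          refine Finset.sum_congr rfl fun i _ => ?_
          rw [habs2 t h1 h2 i]; ring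
      _ = (∑ i, Real.sign (a i) * a i) + t * s := by
          rw [Finset.sum_add_distrib, ← Finset.mul_sum, hs]
      _ = ∑ i, |a i| := by
          rw [hs0, mul_zero, add_zero]
          exact Finset.sum_congr rfl fun i _ => (abs_eq_sign_mul _).symm
  have hsol : ∀ t : ℝ, t₁ < t → t ≤ t₀ → IsLassoSol Φ D y lam (xs + t • z) := by
    intro t h1 h2 x'
    have heq : lassoObj Φ D y lam (xs + t • z) = lassoObj Φ D y lam xs := by
      rw [hobj t, hxsobj, hsum t h1 h2]
    rw [heq]
    exact hxs x'
  refine ⟨t₁, t₀, ht₁neg, ht₀pos, ?_, ?_, ?_, ?_⟩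
  · ext t
    simp only [Set.mem_setOf_eq, key, funext_iff, Set.mem_Ioo]
    exact hBmem t
  · rintro t ⟨h1, h2⟩
    refine ⟨hsol t h1 h2.le, hΦ t, ?_⟩
    simp only [key]
    exact hsum t h1 h2.le
  · exact hsol t₀ (lt_trans ht₁neg ht₀pos) le_rfl
  · obtain ⟨j, hjU, hjc⟩ := Finset.exists_mem_eq_inf' hUne c
    have hjab : a j * b j < 0 := (hUmem j).mp hjU
    have hbj : b j ≠ 0 := right_ne_zero_of_mul hjab.ne
    have haj : a j ≠ 0 := left_ne_zero_of_mul hjab.ne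
    have hjzero : a j + t₀ * b j = 0 := by
      rw [ht₀def, hjc]
      simp only [hc]
      field_simp
      ring
    rw [Set.ssubset_def]
    constructor
    · intro i hi
      simp only [Set.mem_setOf_eq, key] at hi ⊢
      intro hcon
      exact hi (by rw [hcon, hab i hcon]; ring)
    · intro hsup
      have hjmem : j ∈ {i | a i ≠ 0} := haj
      have := hsup hjmem
      simp only [Set.mem_setOf_eq, key] at this
      exact this hjzero
end
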